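/- arXiv:2105.14590 — 3 statements merged into one kernel-verified Lean document; each statement's English description precedes it below -/
import Mathlib

section
/- Let A_n be a sequence of random functions on the real line such that, for each n, h ↦ A_n(h) is concave almost surely, and suppose A_n admits the decomposition A_n(h) = U_n·h − (1/2)·h²·V + r_n(h), where V is a (deterministic) positive real number, U_n is a sequence of real-valued random variables converging in distribution to a random variable U, and for each fixed h the remainder r_n(h) converges to 0 in probability as n → ∞. Then the argmax α_n = argmax_{h∈ℝ} A_n(h) converges in distribution to V⁻¹·U. -/
open MeasureTheory ProbabilityTheory Filter Topology
open scoped ENNReal NNReal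

lemma concave_between {A : ℝ → ℝ} (hA : ConcaveOn ℝ Set.univ A) {x y z m : ℝ}
    (hxy : x ≤ y) (hyz : y ≤ z) (hx : m ≤ A x) (hz : m ≤ A z) : m ≤ A y := by
  rcases eq_or_lt_of_le (hxy.trans hyz) with h | h
  · have hyx : y = x := le_antisymm (h ▸ hyz) hxy
    rw [hyx]; exact hx
  · have hzx : 0 < z - x := by linarith
    set t := (z - y)/(z - x) with ht_def
    set s := (y - x)/(z - x) with hs_def
    have ht : 0 ≤ t := div_nonneg (by linarith) hzx.le
    have hs : 0 ≤ s := div_nonneg (by linarith) hzx.le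
    have hts : t + s = 1 := by rw [ht_def, hs_def]; field_simp; ring
    have hy : t • x + s • z = y := by
      simp only [smul_eq_mul, ht_def, hs_def]; field_simp; ring
    have h2 := hA.2 (Set.mem_univ x) (Set.mem_univ z) ht hs hts
    rw [hy] at h2
    simp only [smul_eq_mul] at h2
    calc m = t*m + s*m := by rw [← add_mul, hts, one_mul]
    _ ≤ t * A x + s * A z :=
      add_le_add (mul_le_mul_of_nonneg_left hx ht) (mul_le_mul_of_nonneg_left hz hs)
    _ ≤ A y := h2

set_option maxHeartbeats 800000 in
lemma hp_det (V : ℝ) (hV : 0 < V) (A : ℝ → ℝ) (U : ℝ) (r : ℝ → ℝ)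
    (hA : ConcaveOn ℝ Set.univ A)
    (hd : ∀ h : ℝ, A h = U * h - (1/2) * h^2 * V + r h)
    (α : ℝ) (hmax : ∀ h, A h ≤ A α)
    (δ : ℝ) (hδ : 0 < δ) (Mv : ℝ) (hU : |U / V| ≤ Mv)
    (hr : ∀ k : ℤ, |(k:ℝ)| * δ ≤ Mv + 2*δ → |r (k * δ)| ≤ V * δ^2 / 8) :
    |α - U / V| ≤ 2*δ := by
  set h' := U / V with hh'
  have hUV : U = V * h' := by rw [hh']; field_simp
  clear_value h'
  have habs := abs_le.mp hU
  have hfl : (⌊h'/δ⌋ : ℝ) ≤ h'/δ := Int.floor_le _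
  have hfl2 : h'/δ - 1 < (⌊h'/δ⌋ : ℝ) := Int.sub_one_lt_floor _
  have hflδ : (⌊h'/δ⌋ : ℝ) * δ ≤ h' := by
    have := mul_le_mul_of_nonneg_right hfl hδ.le
    rwa [div_mul_cancel₀ _ hδ.ne'] at this
  have hflδ2 : h' - δ < (⌊h'/δ⌋ : ℝ) * δ := by
    have := mul_lt_mul_of_pos_right hfl2 hδ
    rw [sub_mul, div_mul_cancel₀ _ hδ.ne', one_mul] at this
    linarith
  -- lower bound
  have hlow : h' - 2*δ < α := by
    set j : ℤ := ⌊h'/δ⌋ - 1 with hj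
    clear_value j
    have hjc : (j:ℝ) * δ = (⌊h'/δ⌋ : ℝ) * δ - δ := by push_cast [hj]; ring
    have hjle : (j:ℝ) * δ ≤ h' - δ := by rw [hjc]; linarith
    have hjgt : h' - 2*δ < (j:ℝ) * δ := by rw [hjc]; linarith
    have hrj : |r ((j:ℝ) * δ)| ≤ V * δ^2 / 8 := by
      apply hr
      have habsj : |(j:ℝ) * δ| ≤ Mv + 2*δ := abs_le.mpr ⟨by linarith, by linarith⟩
      rwa [abs_mul, abs_of_pos hδ] at habsj
    have hrj1 : |r (((j:ℝ)+1) * δ)| ≤ V * δ^2 / 8 := by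
      have := hr (j+1) (by
        have habsj : |((j:ℝ)+1) * δ| ≤ Mv + 2*δ := abs_le.mpr ⟨by nlinarith, by nlinarith⟩
        rw [abs_mul, abs_of_pos hδ] at habsj
        push_cast
        exact habsj)
      push_cast at this ⊢
      exact this
    have hAlt : A ((j:ℝ) * δ) < A (((j:ℝ)+1) * δ) := by
      have e1 := hd ((j:ℝ)*δ); have e2 := hd (((j:ℝ)+1)*δ)
      rw [hUV] at e1 e2
      rw [e1, e2]
      have h1 := abs_le.mp hrj
      have h2 := abs_le.mp hrj1
      have key : V * δ * (δ/2) ≤ V * δ * (h' - (j:ℝ)*δ - δ/2) :=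
        mul_le_mul_of_nonneg_left (by linarith) (by positivity)
      linarith [key, mul_pos (mul_pos hV hδ) hδ, h1.1, h1.2, h2.1, h2.2]
    by_contra hcon
    push_neg at hcon
    have hαle : α ≤ (j:ℝ) * δ := by linarith
    have := concave_between hA hαle (by linarith : (j:ℝ)*δ ≤ ((j:ℝ)+1)*δ)
      (hmax (((j:ℝ)+1) * δ)) (le_refl _)
    linarith
  -- upper bound
  have hhigh : α < h' + 2*δ := by
    set j : ℤ := ⌊h'/δ⌋ + 1 with hj
    clear_value j
    have hjc : (j:ℝ) * δ = (⌊h'/δ⌋ : ℝ) * δ + δ := by push_cast [hj]; ring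
    have hjgt : h' < (j:ℝ) * δ := by rw [hjc]; linarith
    have hjle : (j:ℝ) * δ ≤ h' + δ := by rw [hjc]; linarith
    have hrj : |r ((j:ℝ) * δ)| ≤ V * δ^2 / 8 := by
      apply hr
      have habsj : |(j:ℝ) * δ| ≤ Mv + 2*δ := abs_le.mpr ⟨by linarith, by linarith⟩
      rwa [abs_mul, abs_of_pos hδ] at habsj
    have hrj1 : |r (((j:ℝ)+1) * δ)| ≤ V * δ^2 / 8 := by
      have := hr (j+1) (by
        have habsj : |((j:ℝ)+1) * δ| ≤ Mv + 2*δ := abs_le.mpr ⟨by nlinarith, by nlinarith⟩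
        rw [abs_mul, abs_of_pos hδ] at habsj
        push_cast
        exact habsj)
      push_cast at this ⊢
      exact this
    have hAlt : A (((j:ℝ)+1) * δ) < A ((j:ℝ) * δ) := by
      have e1 := hd ((j:ℝ)*δ); have e2 := hd (((j:ℝ)+1)*δ)
      rw [hUV] at e1 e2
      rw [e1, e2]
      have h1 := abs_le.mp hrj
      have h2 := abs_le.mp hrj1
      have key : V * δ * (δ/2) < V * δ * ((j:ℝ)*δ + δ/2 - h') :=
        mul_lt_mul_of_pos_left (by linarith) (by positivity)
      linarith [key, mul_pos (mul_pos hV hδ) hδ, h1.1, h1.2, h2.1, h2.2]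
    by_contra hcon
    push_neg at hcon
    have hαge : ((j:ℝ)+1) * δ ≤ α := by linarith
    have := concave_between hA (by linarith : (j:ℝ)*δ ≤ ((j:ℝ)+1)*δ) hαge
      (le_refl _) (hmax ((j:ℝ) * δ))
    linarith
  rw [abs_le]
  exact ⟨by linarith, by linarith⟩

/-- Convergence in distribution of a sequence of real-valued random variables on `(Ω, μ)`
to a limiting law `ν` on `ℝ`: weak convergence of the laws, expressed via bounded
continuous test functions. -/
def TendstoInDistribution {Ω : Type*} [MeasurableSpace Ω] (μ : Measure Ω)
    (X : ℕ → Ω → ℝ) (ν : Measure ℝ) : Prop :=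
  ∀ g : ℝ → ℝ, Continuous g → (∃ C, ∀ x, |g x| ≤ C) →
    Tendsto (fun n => ∫ ω, g (X n ω) ∂μ) atTop (𝓝 (∫ x, g x ∂ν))

lemma integrable_comp_bdd {Ω : Type*} [MeasurableSpace Ω] {μ : Measure Ω}
    [IsProbabilityMeasure μ] {X : Ω → ℝ} (hX : Measurable X) {g : ℝ → ℝ}
    (hg : Continuous g) {C : ℝ} (hC : ∀ x, |g x| ≤ C) :
    Integrable (fun ω => g (X ω)) μ := by
  refine Integrable.mono' (integrable_const C) ((hg.measurable.comp hX).aestronglyMeasurable) ?_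
  exact Filter.Eventually.of_forall fun ω => by simpa using hC (X ω)

lemma tight_of_dist {Ω : Type*} [MeasurableSpace Ω] (μ : Measure Ω)
    [IsProbabilityMeasure μ] (U : ℕ → Ω → ℝ) (Ulim : Ω → ℝ)
    (hU_meas : ∀ n, Measurable (U n)) (hUlim_meas : Measurable Ulim)
    (hU_dist : TendstoInDistribution μ U (μ.map Ulim)) :
    ∀ c : ℝ, 0 < c → ∃ M : ℝ, 0 < M ∧
      ∀ᶠ n in atTop, μ {ω | M < |U n ω|} ≤ ENNReal.ofReal c := by
  intro c hc
  set ν := μ.map Ulim with hν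
  have hνprob : IsProbabilityMeasure ν := Measure.isProbabilityMeasure_map hUlim_meas.aemeasurable
  -- find m with ν {x | m < |x|} small
  have hmeasT : ∀ m : ℕ, MeasurableSet {x : ℝ | (m:ℝ) < |x|} := fun m =>
    measurableSet_lt measurable_const (continuous_abs.measurable)
  have hiInter : (⋂ m : ℕ, {x : ℝ | (m:ℝ) < |x|}) = ∅ := by
    ext x
    simp only [Set.mem_iInter, Set.mem_setOf_eq, Set.mem_empty_iff_false, iff_false, not_forall,
      not_lt]
    obtain ⟨m, hm⟩ := exists_nat_ge |x|
    exact ⟨m, hm⟩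
  have htend : Tendsto (fun m : ℕ => ν {x : ℝ | (m:ℝ) < |x|}) atTop (𝓝 0) := by
    have h1 := tendsto_measure_iInter_atTop (μ := ν)
      (fun m => (hmeasT m).nullMeasurableSet)
      (fun a b hab => by
        intro x hx
        simp only [Set.mem_setOf_eq] at hx ⊢
        exact lt_of_le_of_lt (by exact_mod_cast Nat.cast_le.mpr hab) hx)
      ⟨0, measure_ne_top _ _⟩
    rw [hiInter] at h1
    simpa [Function.comp_def] using h1
  have hc2 : (0:ℝ≥0∞) < ENNReal.ofReal (c/2) := by
    simp [ENNReal.ofReal_pos]; linarith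
  obtain ⟨m, hm⟩ := (ENNReal.tendsto_nhds_zero.mp htend (ENNReal.ofReal (c/2)) hc2).exists
  -- test function
  set φ : ℝ → ℝ := fun x => min 1 (max (|x| - m) 0) with hφ
  have hφcont : Continuous φ := by
    apply Continuous.min continuous_const
    exact Continuous.max (continuous_abs.sub continuous_const) continuous_const
  have hφ01 : ∀ x, 0 ≤ φ x ∧ φ x ≤ 1 := fun x =>
    ⟨le_min (by norm_num) (le_max_right _ _), min_le_left _ _⟩
  have hφbd : ∀ x, |φ x| ≤ 1 := fun x => abs_le.mpr ⟨by linarith [(hφ01 x).1], (hφ01 x).2⟩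
  have hφind : ∀ x : ℝ, φ x ≤ Set.indicator {x : ℝ | (m:ℝ) < |x|} (fun _ => (1:ℝ)) x := by
    intro x
    by_cases hx : x ∈ {x : ℝ | (m:ℝ) < |x|}
    · rw [Set.indicator_of_mem hx]; exact (hφ01 x).2
    · rw [Set.indicator_of_notMem hx]
      simp only [Set.mem_setOf_eq] at hx
      simp only [hφ]
      push_neg at hx
      have : max (|x| - m) 0 = 0 := max_eq_right (by linarith)
      rw [this]
      norm_num
  have hφν : ∫ x, φ x ∂ν ≤ c/2 := by
    have h1 : ∫ x, φ x ∂ν ≤ ∫ x, Set.indicator {x : ℝ | (m:ℝ) < |x|} (fun _ => (1:ℝ)) x ∂ν := by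
      apply integral_mono
      · exact integrable_comp_bdd (X := id) measurable_id hφcont hφbd
      · exact (integrable_const (1:ℝ)).indicator (hmeasT m)
      · exact hφind
    rw [integral_indicator_const (1:ℝ) (hmeasT m)] at h1
    have h2 : (ν {x : ℝ | (m:ℝ) < |x|}).toReal ≤ c/2 := by
      refine ENNReal.toReal_le_of_le_ofReal (by linarith) ?_
      exact hm
    simp only [smul_eq_mul, mul_one, measureReal_def] at h1
    linarith
  have htest := hU_dist φ hφcont ⟨1, hφbd⟩
  have hev : ∀ᶠ n in atTop, ∫ ω, φ (U n ω) ∂μ ≤ 3*c/4 := by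
    have := Metric.tendsto_atTop.mp htest (c/4) (by linarith)
    obtain ⟨N, hN⟩ := this
    refine eventually_atTop.mpr ⟨N, fun n hn => ?_⟩
    have := hN n hn
    rw [Real.dist_eq] at this
    have := abs_lt.mp this
    linarith [this.1, this.2, hφν]
  refine ⟨m + 1, by positivity, ?_⟩
  filter_upwards [hev] with n hn
  -- μ {ω | m+1 < |U n ω|} ≤ ∫ φ (U n)
  have hSmeas : MeasurableSet {ω | (m:ℝ) + 1 < |U n ω|} :=
    measurableSet_lt measurable_const ((hU_meas n).abs)
  have hind : ∀ ω, Set.indicator {ω | (m:ℝ) + 1 < |U n ω|} (fun _ => (1:ℝ)) ω ≤ φ (U n ω) := by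
    intro ω
    by_cases hω : ω ∈ {ω | (m:ℝ) + 1 < |U n ω|}
    · rw [Set.indicator_of_mem hω]
      simp only [Set.mem_setOf_eq] at hω
      simp only [hφ]
      have : (1:ℝ) ≤ max (|U n ω| - m) 0 := le_max_of_le_left (by linarith)
      exact le_min le_rfl this
    · rw [Set.indicator_of_notMem hω]
      exact (hφ01 _).1
  have h1 : (μ {ω | (m:ℝ) + 1 < |U n ω|}).toReal ≤ ∫ ω, φ (U n ω) ∂μ := by
    have := integral_mono (μ := μ) ((integrable_const (1:ℝ)).indicator hSmeas)
      (integrable_comp_bdd (hU_meas n) hφcont hφbd) hind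
    rwa [integral_indicator_const (1:ℝ) hSmeas, smul_eq_mul, mul_one] at this
  refine ENNReal.le_ofReal_iff_toReal_le (measure_ne_top _ _) hc.le |>.mpr ?_
  linarith

lemma conv_prob
    {Ω : Type*} [MeasurableSpace Ω] (μ : Measure Ω) [IsProbabilityMeasure μ]
    (A : ℕ → Ω → ℝ → ℝ) (U : ℕ → Ω → ℝ) (r : ℕ → Ω → ℝ → ℝ)
    (V : ℝ) (hV : 0 < V) (Ulim : Ω → ℝ)
    (hA_concave : ∀ n, ∀ᵐ ω ∂μ, ConcaveOn ℝ Set.univ (A n ω))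
    (hdecomp : ∀ n, ∀ ω, ∀ h : ℝ,
      A n ω h = U n ω * h - (1 / 2) * h ^ 2 * V + r n ω h)
    (hU_meas : ∀ n, Measurable (U n)) (hUlim_meas : Measurable Ulim)
    (hU_dist : TendstoInDistribution μ U (μ.map Ulim))
    (hr_prob : ∀ h : ℝ, ∀ ε : ℝ, 0 < ε →
      Tendsto (fun n => μ {ω | ε < |r n ω h|}) atTop (𝓝 0))
    (α : ℕ → Ω → ℝ)
    (hα_max : ∀ n, ∀ᵐ ω ∂μ, ∀ h : ℝ, A n ω h ≤ A n ω (α n ω)) :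
    ∀ ε c : ℝ, 0 < ε → 0 < c → ∀ᶠ n in atTop,
      μ {ω | ε < |α n ω - V⁻¹ * U n ω|} ≤ ENNReal.ofReal c := by
  intro ε c hε hc
  obtain ⟨M, hM, hMev⟩ := tight_of_dist μ U Ulim hU_meas hUlim_meas hU_dist (c/2) (half_pos hc)
  set δ := ε/3 with hδdef
  have hδ : 0 < δ := by rw [hδdef]; linarith
  set Mv := M/V with hMvdef
  have hMv : 0 < Mv := div_pos hM hV
  set N : ℤ := ⌈Mv/δ⌉ + 2 with hNdef
  set S : Finset ℤ := Finset.Icc (-N) N with hSdef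
  have hsum : Tendsto (fun n => ∑ k ∈ S, μ {ω | V*δ^2/16 < |r n ω ((k:ℝ)*δ)|}) atTop (𝓝 0) := by
    have h1 := tendsto_finset_sum S
      (fun k (_ : k ∈ S) => hr_prob ((k:ℝ)*δ) (V*δ^2/16) (by positivity))
    simpa using h1
  have hsum_ev : ∀ᶠ n in atTop,
      ∑ k ∈ S, μ {ω | V*δ^2/16 < |r n ω ((k:ℝ)*δ)|} ≤ ENNReal.ofReal (c/2) :=
    ENNReal.tendsto_nhds_zero.mp hsum _ (by simp only [gt_iff_lt, ENNReal.ofReal_pos]; linarith)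
  filter_upwards [hMev, hsum_ev] with n h1 h2
  set G : Set Ω := {ω | ¬ (ConcaveOn ℝ Set.univ (A n ω) ∧ ∀ h, A n ω h ≤ A n ω (α n ω))}
    with hGdef
  have hG0 : μ G = 0 := by
    rw [hGdef]
    exact ae_iff.mp ((hA_concave n).and (hα_max n))
  have hsub : {ω | ε < |α n ω - V⁻¹ * U n ω|} ⊆
      G ∪ ({ω | M < |U n ω|} ∪ ⋃ k ∈ S, {ω | V*δ^2/16 < |r n ω ((k:ℝ)*δ)|}) := by
    intro ω hω
    by_cases hgs : ConcaveOn ℝ Set.univ (A n ω) ∧ ∀ h, A n ω h ≤ A n ω (α n ω)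
    · right
      by_cases hMU : M < |U n ω|
      · left; exact hMU
      · right
        simp only [Set.mem_iUnion]
        by_contra hnot
        push_neg at hnot
        simp only [Set.mem_setOf_eq, not_lt] at hnot
        push_neg at hMU
        have hUb : |U n ω / V| ≤ Mv := by
          rw [abs_div, abs_of_pos hV, hMvdef]
          exact (div_le_div_iff_of_pos_right hV).mpr hMU
        have hrb : ∀ k : ℤ, |(k:ℝ)| * δ ≤ Mv + 2*δ → |r n ω ((k:ℝ)*δ)| ≤ V * δ^2/8 := by
          intro k hk
          have hkS : k ∈ S := by
            have h3 : |(k:ℝ)| ≤ (Mv + 2*δ)/δ := (le_div_iff₀ hδ).mpr hk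
            have h3' : (Mv + 2*δ)/δ = Mv/δ + 2 := by field_simp
            have hceil : Mv/δ ≤ (⌈Mv/δ⌉:ℝ) := Int.le_ceil _
            have h4 : |(k:ℝ)| ≤ (N:ℝ) := by
              rw [hNdef]; push_cast; linarith
            rw [← Int.cast_abs] at h4
            have h5 : |k| ≤ N := by exact_mod_cast h4
            rw [hSdef, Finset.mem_Icc]
            exact ⟨neg_le_of_abs_le h5, le_of_abs_le h5⟩
          have hVδ : 0 ≤ V * δ^2 := by positivity
          linarith [hnot k hkS]
        have hdet := hp_det V hV (A n ω) (U n ω) (r n ω) hgs.1 (hdecomp n ω)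
          (α n ω) hgs.2 δ hδ Mv hUb hrb
        rw [Set.mem_setOf_eq, inv_mul_eq_div] at hω
        linarith [hω, hdet]
    · left
      rw [hGdef]
      exact hgs
  refine le_trans (measure_mono hsub) ?_
  calc μ (G ∪ ({ω | M < |U n ω|} ∪ ⋃ k ∈ S, {ω | V*δ^2/16 < |r n ω ((k:ℝ)*δ)|}))
      ≤ μ G + μ ({ω | M < |U n ω|} ∪ ⋃ k ∈ S, {ω | V*δ^2/16 < |r n ω ((k:ℝ)*δ)|}) :=
        measure_union_le _ _
    _ ≤ 0 + (μ {ω | M < |U n ω|} + μ (⋃ k ∈ S, {ω | V*δ^2/16 < |r n ω ((k:ℝ)*δ)|})) := by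
        rw [hG0]
        exact add_le_add le_rfl (measure_union_le _ _)
    _ ≤ μ {ω | M < |U n ω|} + ∑ k ∈ S, μ {ω | V*δ^2/16 < |r n ω ((k:ℝ)*δ)|} := by
        rw [zero_add]
        exact add_le_add le_rfl (measure_biUnion_finset_le _ _)
    _ ≤ ENNReal.ofReal (c/2) + ENNReal.ofReal (c/2) := add_le_add h1 h2
    _ = ENNReal.ofReal c := by
        rw [← ENNReal.ofReal_add (by linarith) (by linarith)]
        norm_num

/-- **Hjort–Pollard basic corollary.** Let `A n` be random concave functions on `ℝ`
admitting the decomposition `A n ω h = U n ω * h - (1/2) * h ^ 2 * V + r n ω h` with `V > 0`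
deterministic, `U n` converging in distribution to `Ulim`, and `r n · h → 0` in probability
for each fixed `h`. If `α n ω` maximizes `h ↦ A n ω h`, then `α n` converges in
distribution to `V⁻¹ * Ulim`. -/
theorem hjort_pollard_argmax_convergence
    {Ω : Type*} [MeasurableSpace Ω] (μ : Measure Ω) [IsProbabilityMeasure μ]
    (A : ℕ → Ω → ℝ → ℝ) (U : ℕ → Ω → ℝ) (r : ℕ → Ω → ℝ → ℝ)
    (V : ℝ) (hV : 0 < V) (Ulim : Ω → ℝ)
    (hA_concave : ∀ n, ∀ᵐ ω ∂μ, ConcaveOn ℝ Set.univ (A n ω))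
    (hdecomp : ∀ n, ∀ ω, ∀ h : ℝ,
      A n ω h = U n ω * h - (1 / 2) * h ^ 2 * V + r n ω h)
    (hU_meas : ∀ n, Measurable (U n)) (hUlim_meas : Measurable Ulim)
    (hU_dist : TendstoInDistribution μ U (μ.map Ulim))
    (hr_prob : ∀ h : ℝ, ∀ ε : ℝ, 0 < ε →
      Tendsto (fun n => μ {ω | ε < |r n ω h|}) atTop (𝓝 0))
    (α : ℕ → Ω → ℝ) (hα_meas : ∀ n, Measurable (α n))
    (hα_max : ∀ n, ∀ᵐ ω ∂μ, ∀ h : ℝ, A n ω h ≤ A n ω (α n ω)) :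
    TendstoInDistribution μ α (μ.map fun ω => V⁻¹ * Ulim ω) := by
  intro g hg hgbd
  obtain ⟨C, hC⟩ := hgbd
  have hC0 : 0 ≤ C := (abs_nonneg _).trans (hC 0)
  set C' := C + 1 with hC'def
  have hC' : 0 < C' := by rw [hC'def]; linarith
  have hCle : ∀ x, |g x| ≤ C' := fun x => (hC x).trans (by rw [hC'def]; linarith)
  have hscont : Continuous fun x : ℝ => g (V⁻¹ * x) :=
    hg.comp (continuous_const.mul continuous_id)
  have hmeas_scaled : Measurable fun ω => V⁻¹ * Ulim ω := hUlim_meas.const_mul _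
  have hLeq : ∫ x, g x ∂(μ.map fun ω => V⁻¹ * Ulim ω)
      = ∫ x, g (V⁻¹ * x) ∂(μ.map Ulim) := by
    rw [integral_map hmeas_scaled.aemeasurable hg.aestronglyMeasurable,
        integral_map hUlim_meas.aemeasurable hscont.aestronglyMeasurable]
  have hY : Tendsto (fun n => ∫ ω, g (V⁻¹ * U n ω) ∂μ) atTop
      (𝓝 (∫ x, g (V⁻¹ * x) ∂(μ.map Ulim))) :=
    hU_dist _ hscont ⟨C, fun x => hC _⟩
  have hprob := conv_prob μ A U r V hV Ulim hA_concave hdecomp hU_meas hUlim_meas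
    hU_dist hr_prob α hα_max
  have hdiff : Tendsto
      (fun n => (∫ ω, g (α n ω) ∂μ) - ∫ ω, g (V⁻¹ * U n ω) ∂μ) atTop (𝓝 0) := by
    rw [Metric.tendsto_atTop]
    intro ε hε
    obtain ⟨M, hM, hMev⟩ := tight_of_dist μ U Ulim hU_meas hUlim_meas hU_dist
      (ε/(8*C')) (by positivity)
    set R := M/V with hRdef
    have hR : 0 < R := div_pos hM hV
    have huc := (isCompact_Icc :
      IsCompact (Set.Icc (-(R+1)) (R+1))).uniformContinuousOn_of_continuous hg.continuousOn
    rw [Metric.uniformContinuousOn_iff] at huc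
    obtain ⟨δ0, hδ0, hδ0p⟩ := huc (ε/4) (by linarith)
    set δ := min (δ0/2) 1 with hδdef
    have hδpos : 0 < δ := lt_min (by linarith) one_pos
    have hkey : ∀ x y : ℝ, |y| ≤ R → |x - y| ≤ δ → |g x - g y| ≤ ε/4 := by
      intro x y hy hxy
      have hy' := abs_le.mp hy
      have hδ1 : δ ≤ 1 := min_le_right _ _
      have hδ2 : δ ≤ δ0/2 := min_le_left _ _
      have hx' : |x| ≤ R + 1 := by
        have := abs_le.mp hxy
        rw [abs_le]; constructor <;> [skip; skip] <;> nlinarith [abs_le.mp hxy]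
      have hxI : x ∈ Set.Icc (-(R+1)) (R+1) := by
        rw [Set.mem_Icc]; exact abs_le.mp hx'
      have hyI : y ∈ Set.Icc (-(R+1)) (R+1) := by
        rw [Set.mem_Icc]; constructor <;> linarith
      have := hδ0p x hxI y hyI (by rw [Real.dist_eq]; linarith)
      rw [Real.dist_eq] at this
      linarith
    have hprobev := hprob δ (ε/(8*C')) hδpos (by positivity)
    rw [← eventually_atTop]
    filter_upwards [hMev, hprobev] with n hn1 hn2
    have hint1 : Integrable (fun ω => g (α n ω)) μ :=
      integrable_comp_bdd (hα_meas n) hg hCle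
    have hint2 : Integrable (fun ω => g (V⁻¹ * U n ω)) μ :=
      integrable_comp_bdd ((hU_meas n).const_mul _) hg hCle
    set D : Set Ω := {ω | |α n ω - V⁻¹ * U n ω| ≤ δ ∧ |U n ω| ≤ M} with hDdef
    have hDmeas : MeasurableSet D := by
      rw [hDdef]
      have m1 : Measurable fun ω => |α n ω - V⁻¹ * U n ω| :=
        ((hα_meas n).sub ((hU_meas n).const_mul _)).abs
      have m2 : Measurable fun ω => |U n ω| := (hU_meas n).abs
      exact (measurableSet_le m1 measurable_const).inter (measurableSet_le m2 measurable_const)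
    have hptwise : ∀ ω, |g (α n ω) - g (V⁻¹ * U n ω)|
        ≤ ε/4 + Set.indicator Dᶜ (fun _ => 2*C') ω := by
      intro ω
      by_cases hω : ω ∈ D
      · rw [Set.indicator_of_notMem (Set.notMem_compl_iff.mpr hω)]
        rw [hDdef] at hω
        obtain ⟨hω1, hω2⟩ := hω
        have hYb : |V⁻¹ * U n ω| ≤ R := by
          have he : |V⁻¹ * U n ω| = |U n ω| / V := by
            rw [abs_mul, abs_inv, abs_of_pos hV, inv_mul_eq_div]
          rw [he, hRdef]
          gcongr
        have := hkey (α n ω) (V⁻¹ * U n ω) hYb hω1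
        linarith
      · rw [Set.indicator_of_mem (Set.mem_compl hω)]
        have b1 := abs_le.mp (hCle (α n ω))
        have b2 := abs_le.mp (hCle (V⁻¹ * U n ω))
        rw [abs_le]
        exact ⟨by linarith [b1.1, b2.2], by linarith [b1.2, b2.1]⟩
    have hintabs : Integrable (fun ω => |g (α n ω) - g (V⁻¹ * U n ω)|) μ :=
      (hint1.sub hint2).abs
    have hindint : Integrable (fun ω => Set.indicator Dᶜ (fun _ => 2*C') ω) μ := by
      simpa using (integrable_const (2*C')).indicator hDmeas.compl
    have hintRHS : Integrable (fun ω => ε/4 + Set.indicator Dᶜ (fun _ => 2*C') ω) μ :=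
      (integrable_const _).add hindint
    have hRHS : ∫ ω, (ε/4 + Set.indicator Dᶜ (fun _ => 2*C') ω) ∂μ
        = ε/4 + 2*C' * (μ Dᶜ).toReal := by
      rw [integral_add (integrable_const _) hindint, integral_const,
        integral_indicator_const (2*C') hDmeas.compl]
      simp only [measureReal_def, measure_univ, ENNReal.toReal_one, smul_eq_mul, one_mul]
      ring
    have hI : ∫ ω, |g (α n ω) - g (V⁻¹ * U n ω)| ∂μ
        ≤ ε/4 + 2*C' * (μ Dᶜ).toReal := by
      have hmono := integral_mono hintabs hintRHS hptwise
      rw [hRHS] at hmono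
      exact hmono
    have hμDc : (μ Dᶜ).toReal ≤ ε/(4*C') := by
      have hsub2 : Dᶜ ⊆ {ω | δ < |α n ω - V⁻¹ * U n ω|} ∪ {ω | M < |U n ω|} := by
        intro ω hω
        rw [hDdef] at hω
        simp only [Set.mem_compl_iff, Set.mem_setOf_eq, not_and_or, not_le] at hω
        rcases hω with h | h
        · left; exact h
        · right; exact h
      have hle : μ Dᶜ ≤ ENNReal.ofReal (ε/(8*C') + ε/(8*C')) := by
        rw [ENNReal.ofReal_add (by positivity) (by positivity)]
        exact le_trans (measure_mono hsub2)
          (le_trans (measure_union_le _ _) (add_le_add hn2 hn1))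
      have h2 := ENNReal.toReal_le_of_le_ofReal (by positivity) hle
      have he : ε/(8*C') + ε/(8*C') = ε/(4*C') := by
        field_simp
        ring
      linarith [h2, he ▸ h2]
    rw [Real.dist_eq, sub_zero, ← integral_sub hint1 hint2]
    have habsint : |∫ ω, (g (α n ω) - g (V⁻¹ * U n ω)) ∂μ|
        ≤ ∫ ω, |g (α n ω) - g (V⁻¹ * U n ω)| ∂μ := by
      have := norm_integral_le_integral_norm (μ := μ)
        (fun ω => g (α n ω) - g (V⁻¹ * U n ω))
      simpa [Real.norm_eq_abs] using this
    have hfin : 2*C' * (μ Dᶜ).toReal ≤ ε/2 := by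
      have := mul_le_mul_of_nonneg_left hμDc (by positivity : (0:ℝ) ≤ 2*C')
      have he2 : 2*C' * (ε/(4*C')) = ε/2 := by
        field_simp
        ring
      linarith [he2 ▸ this]
    calc |∫ ω, (g (α n ω) - g (V⁻¹ * U n ω)) ∂μ|
        ≤ ∫ ω, |g (α n ω) - g (V⁻¹ * U n ω)| ∂μ := habsint
      _ ≤ ε/4 + 2*C' * (μ Dᶜ).toReal := hI
      _ ≤ ε/4 + ε/2 := by linarith
      _ < ε := by linarith
  rw [hLeq]
  have h3 := hdiff.add hY
  rw [zero_add] at h3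
  have heq : (fun n => ((∫ ω, g (α n ω) ∂μ) - ∫ ω, g (V⁻¹ * U n ω) ∂μ)
      + ∫ ω, g (V⁻¹ * U n ω) ∂μ) = fun n => ∫ ω, g (α n ω) ∂μ := by
    funext n
    ring
  rwa [heq] at h3
end

section
/- For every integer m ≥ 1 and every r ∈ {1, …, m}, the function x ↦ 𝔹_(r)(x) = (1/r)·∑_{i=1}^{r} 𝔹(x, i, m+1−i) is log-concave on (0,1), i.e., x ↦ log 𝔹_(r)(x) is concave on (0,1). Moreover, the function x ↦ 1 − 𝔹_(r)(x) is also log-concave on (0,1). -/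
open Finset

/-- The Beta(i, m+1-i) cumulative distribution function evaluated at `x`. -/
noncomputable def betaCDF (m i : ℕ) (x : ℝ) : ℝ :=
  ∫ u in (0:ℝ)..x, (i : ℝ) * (m.choose i : ℝ) * u ^ (i - 1) * (1 - u) ^ (m - i)

/-- `𝔹_(r)(x) = (1/r) ∑_{i=1}^r 𝔹(x, i, m+1-i)`. -/
noncomputable def strataCDF (m r : ℕ) (x : ℝ) : ℝ :=
  (1 / r : ℝ) * ∑ i ∈ Finset.Icc 1 r, betaCDF m i x


/-- Bernstein basis function. -/
noncomputable def Wf (n i : ℕ) (x : ℝ) : ℝ := (n.choose i : ℝ) * x ^ i * (1 - x) ^ (n - i)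

/-- Binomial CDF: `P(Bin(n,x) ≤ k)`. -/
noncomputable def Sf (n k : ℕ) (x : ℝ) : ℝ := ∑ i ∈ range (k + 1), Wf n i x

lemma hasDerivAt_monomial (a b : ℕ) (x : ℝ) :
    HasDerivAt (fun x : ℝ => x ^ a * (1 - x) ^ b)
      ((a : ℝ) * x ^ (a - 1) * (1 - x) ^ b - (b : ℝ) * x ^ a * (1 - x) ^ (b - 1)) x := by
  have h1 : HasDerivAt (fun x : ℝ => x ^ a) ((a : ℝ) * x ^ (a - 1)) x := hasDerivAt_pow a x
  have hin : HasDerivAt (fun x : ℝ => 1 - x) (-1) x := by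
    simpa using (hasDerivAt_id x).const_sub 1
  have h2 : HasDerivAt (fun x : ℝ => (1 - x) ^ b) ((b : ℝ) * (1 - x) ^ (b - 1) * (-1)) x :=
    (hasDerivAt_pow b (1 - x)).comp x hin
  have := h1.mul h2
  refine this.congr_deriv (Eq.symm ?_)
  ring

lemma nat_id1 (n i : ℕ) : n.choose (i + 1) * (i + 1) = n * (n - 1).choose i := by
  cases n with
  | zero => simp [Nat.choose_eq_zero_of_lt (by omega : 0 < i + 1)]
  | succ n =>
    rw [Nat.succ_sub_one]
    exact (Nat.add_one_mul_choose_eq n i).symm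

lemma nat_id2 (n i : ℕ) : n.choose (i + 1) * (n - (i + 1)) = n * (n - 1).choose (i + 1) := by
  rw [← nat_id1 n (i + 1), Nat.choose_succ_right_eq]

lemma hasDerivAt_Wf_succ (n i : ℕ) (x : ℝ) :
    HasDerivAt (fun x => Wf n (i + 1) x)
      ((n : ℝ) * ((n - 1).choose i) * x ^ i * (1 - x) ^ (n - 1 - i)
        - (n : ℝ) * ((n - 1).choose (i + 1)) * x ^ (i + 1) * (1 - x) ^ (n - 1 - (i + 1))) x := by
  have h := (hasDerivAt_monomial (i + 1) (n - (i + 1)) x).const_mul ((n.choose (i + 1) : ℝ))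
  have hfun : (fun x : ℝ => (n.choose (i + 1) : ℝ) * (x ^ (i + 1) * (1 - x) ^ (n - (i + 1))))
      = fun x => Wf n (i + 1) x := by
    funext y; simp [Wf, mul_assoc]
  rw [hfun] at h
  refine h.congr_deriv (Eq.symm ?_)
  have e1 : n - (i + 1) = n - 1 - i := by omega
  have e2 : n - (i + 1) - 1 = n - 1 - (i + 1) := by omega
  have c1 : ((n.choose (i + 1) : ℝ)) * ((i + 1 : ℕ) : ℝ) = (n : ℝ) * ((n - 1).choose i : ℝ) := by
    exact_mod_cast congrArg (fun t : ℕ => (t : ℝ)) (nat_id1 n i)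
  have c2 : ((n.choose (i + 1) : ℝ)) * ((n - (i + 1) : ℕ) : ℝ)
      = (n : ℝ) * ((n - 1).choose (i + 1) : ℝ) := by
    exact_mod_cast congrArg (fun t : ℕ => (t : ℝ)) (nat_id2 n i)
  rw [← e1, ← e2]
  push_cast at c1 c2 ⊢
  linear_combination (- (x ^ i * (1 - x) ^ (n - (i + 1)))) * c1
    + x ^ (i + 1) * (1 - x) ^ (n - (i + 1) - 1) * c2

lemma hasDerivAt_Sf (n k : ℕ) (x : ℝ) :
    HasDerivAt (fun x => Sf n k x)
      (-((n : ℝ) * ((n - 1).choose k) * x ^ k * (1 - x) ^ (n - 1 - k))) x := by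
  induction k with
  | zero =>
    have h := (hasDerivAt_monomial 0 n x).const_mul ((n.choose 0 : ℝ))
    have hfun : (fun x : ℝ => (n.choose 0 : ℝ) * (x ^ 0 * (1 - x) ^ n))
        = fun x => Sf n 0 x := by
      funext y; simp [Sf, Wf]
    rw [hfun] at h
    refine h.congr_deriv (Eq.symm ?_)
    simp
  | succ k ih =>
    have hW := hasDerivAt_Wf_succ n k x
    have h := ih.add hW
    have hfun : ((fun x => Sf n k x) + fun x => Wf n (k + 1) x) = fun x => Sf n (k + 1) x := by
      funext y; simp [Sf, Finset.sum_range_succ]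
    rw [hfun] at h
    refine h.congr_deriv (Eq.symm ?_)
    ring

lemma sum_Wf (m : ℕ) (x : ℝ) : ∑ i ∈ range (m + 1), Wf m i x = 1 := by
  have h := add_pow x (1 - x) m
  have hx : x + (1 - x) = 1 := by ring
  rw [hx, one_pow] at h
  rw [h]
  apply Finset.sum_congr rfl
  intro i _
  simp [Wf]; ring

lemma Sf_zero (m k : ℕ) : Sf m k 0 = 1 := by
  rw [Sf, Finset.sum_eq_single 0]
  · simp [Wf]
  · intro i _ hi
    simp [Wf, zero_pow hi]
  · intro h
    exact absurd (Finset.mem_range.mpr (by omega)) h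

lemma Wf_nonneg (n i : ℕ) {x : ℝ} (hx0 : 0 ≤ x) (hx1 : x ≤ 1) : 0 ≤ Wf n i x := by
  have : 0 ≤ 1 - x := by linarith
  unfold Wf; positivity

lemma Sf_pos (m k : ℕ) {x : ℝ} (hx0 : 0 ≤ x) (hx1 : x < 1) : 0 < Sf m k x := by
  apply Finset.sum_pos'
  · intro i _; exact Wf_nonneg m i hx0 (by linarith)
  · refine ⟨0, Finset.mem_range.mpr (by omega), ?_⟩
    have : 0 < 1 - x := by linarith
    simp only [Wf, Nat.choose_zero_right, pow_zero, Nat.sub_zero]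
    positivity

lemma Sf_lt_one (m k : ℕ) (hk : k + 1 ≤ m) {x : ℝ} (hx0 : 0 < x) (hx1 : x < 1) :
    Sf m k x < 1 := by
  rw [← sum_Wf m x, Sf]
  apply Finset.sum_lt_sum_of_subset (Finset.range_subset_range.mpr (by omega))
    (Finset.mem_range.mpr (by omega : m < m + 1)) (by simp; omega)
  · simp only [Wf, Nat.choose_self, Nat.sub_self, pow_zero, Nat.cast_one]
    positivity
  · intro j _ _; exact Wf_nonneg m j (le_of_lt hx0) (le_of_lt hx1)

lemma sum_Sf (M k : ℕ) (x : ℝ) :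
    ∑ j ∈ range (k + 1), Sf M j x = ∑ i ∈ range (k + 1), ((k + 1 - i : ℕ) : ℝ) * Wf M i x := by
  induction k with
  | zero => simp [Sf]
  | succ k ih =>
    rw [Finset.sum_range_succ, ih]
    have hcong : ∀ i ∈ range (k + 2),
        ((k + 2 - i : ℕ) : ℝ) * Wf M i x = ((k + 1 - i : ℕ) : ℝ) * Wf M i x + Wf M i x := by
      intro i hi
      have hi' : i ≤ k + 1 := by simpa [Nat.lt_succ_iff] using Finset.mem_range.mp hi
      have : (k + 2 - i : ℕ) = (k + 1 - i) + 1 := by omega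
      rw [this]; push_cast; ring
    rw [Finset.sum_congr rfl hcong, Finset.sum_add_distrib]
    have : ∑ i ∈ range (k + 2), ((k + 1 - i : ℕ) : ℝ) * Wf M i x
        = ∑ i ∈ range (k + 1), ((k + 1 - i : ℕ) : ℝ) * Wf M i x := by
      rw [Finset.sum_range_succ]
      simp
    rw [this, Sf]

lemma Wf_mul (n a b : ℕ) (x : ℝ) (ha : a ≤ n) (hb : b ≤ n) :
    Wf n a x * Wf n b x
      = ((n.choose a * n.choose b : ℕ) : ℝ) * (x ^ (a + b) * (1 - x) ^ (2 * n - (a + b))) := by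
  simp only [Wf]
  push_cast
  rw [show 2 * n - (a + b) = (n - a) + (n - b) by omega, pow_add, pow_add]
  ring

lemma choose_step {n a b : ℕ} (hab : a < b) (hb : b ≤ n) :
    n.choose a * n.choose b ≤ n.choose (a + 1) * n.choose (b - 1) := by
  have h1 : n.choose (a + 1) * (a + 1) = n.choose a * (n - a) := Nat.choose_succ_right_eq n a
  have h2 : n.choose b * b = n.choose (b - 1) * (n - (b - 1)) := by
    conv_lhs => rw [show b = (b - 1) + 1 by omega]
    rw [Nat.choose_succ_right_eq n (b - 1)]
  have key : (a + 1) * (n - b + 1) ≤ (n - a) * b :=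
    (Nat.mul_le_mul (by omega : a + 1 ≤ b) (by omega : n - b + 1 ≤ n - a)).trans_eq
      (Nat.mul_comm _ _)
  have hpos : 0 < (a + 1) * (n - b + 1) := by positivity
  apply Nat.le_of_mul_le_mul_right _ hpos
  calc n.choose a * n.choose b * ((a + 1) * (n - b + 1))
      ≤ n.choose a * n.choose b * ((n - a) * b) :=
        Nat.mul_le_mul_left _ key
    _ = (n.choose a * (n - a)) * (n.choose b * b) := by ring
    _ = (n.choose (a + 1) * (a + 1)) * (n.choose (b - 1) * (n - (b - 1))) := by rw [h1, h2]
    _ = n.choose (a + 1) * n.choose (b - 1) * ((a + 1) * (n - b + 1)) := by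
        rw [show n - (b - 1) = n - b + 1 by omega]; ring

lemma choose_shift {n : ℕ} :
    ∀ d a b, a + 2 * d ≤ b → b ≤ n →
      n.choose a * n.choose b ≤ n.choose (a + d) * n.choose (b - d) := by
  intro d
  induction d with
  | zero => intro a b _ _; simp
  | succ d ih =>
    intro a b h hb
    have h1 : a < b := by omega
    calc n.choose a * n.choose b ≤ n.choose (a + 1) * n.choose (b - 1) := choose_step h1 hb
      _ ≤ n.choose (a + 1 + d) * n.choose (b - 1 - d) := ih (a + 1) (b - 1) (by omega) (by omega)
      _ = n.choose (a + (d + 1)) * n.choose (b - (d + 1)) := by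
          rw [show a + 1 + d = a + (d + 1) by omega, show b - 1 - d = b - (d + 1) by omega]

lemma choose_pair_le {n j k i : ℕ} (hj : j ≤ i) (hik : i ≤ k) (hk : k ≤ n) :
    n.choose j * n.choose k ≤ n.choose i * n.choose (k + j - i) := by
  rcases le_or_gt (2 * i) (k + j) with h | h
  · have := choose_shift (n := n) (i - j) j k (by omega) hk
    rwa [show j + (i - j) = i by omega, show k - (i - j) = k + j - i by omega] at this
  · have := choose_shift (n := n) (k - i) j k (by omega) hk
    rw [show j + (k - i) = k + j - i by omega, show k - (k - i) = i by omega] at this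
    simpa [Nat.mul_comm] using this

lemma coeff_ineq {n k j : ℕ} (hj : j ≤ k) (hk : k + 1 ≤ n) :
    n * (n - 1).choose k * ((k + 1 - j) * (n + 1).choose j)
      ≤ (n + 1) * ∑ i ∈ Icc j k, n.choose i * n.choose (k + j - i) := by
  have hsum : (k + 1 - j) * (n.choose j * n.choose k)
      ≤ ∑ i ∈ Icc j k, n.choose i * n.choose (k + j - i) := by
    have hcard : (Icc j k).card = k + 1 - j := by rw [Nat.card_Icc]
    calc (k + 1 - j) * (n.choose j * n.choose k)
        = ∑ _i ∈ Icc j k, n.choose j * n.choose k := by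
          rw [Finset.sum_const, hcard, smul_eq_mul]
      _ ≤ ∑ i ∈ Icc j k, n.choose i * n.choose (k + j - i) := by
          apply Finset.sum_le_sum
          intro i hi
          obtain ⟨h1, h2⟩ := Finset.mem_Icc.mp hi
          exact choose_pair_le h1 h2 (by omega)
  have hmain : n * (n - 1).choose k * (n + 1).choose j ≤ (n + 1) * (n.choose j * n.choose k) := by
    apply Nat.le_of_mul_le_mul_right _ (show 0 < n + 1 - j by omega)
    have h1 : (n + 1).choose j * (n + 1 - j) = n.choose j * (n + 1) :=
      (Nat.choose_mul_succ_eq n j).symm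
    have h2 : (n - 1).choose k * n = n.choose k * (n - k) := by
      have h := Nat.choose_mul_succ_eq (n - 1) k
      rw [show n - 1 + 1 = n by omega] at h
      rw [h, show n - k = n - 1 + 1 - k by omega]
    calc n * (n - 1).choose k * (n + 1).choose j * (n + 1 - j)
        = ((n - 1).choose k * n) * ((n + 1).choose j * (n + 1 - j)) := by ring
      _ = (n.choose k * (n - k)) * (n.choose j * (n + 1)) := by rw [h1, h2]
      _ ≤ (n.choose k * (n + 1 - j)) * (n.choose j * (n + 1)) := by
          apply Nat.mul_le_mul_right
          exact Nat.mul_le_mul_left _ (by omega)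
      _ = (n + 1) * (n.choose j * n.choose k) * (n + 1 - j) := by ring
  calc n * (n - 1).choose k * ((k + 1 - j) * (n + 1).choose j)
      = (k + 1 - j) * (n * (n - 1).choose k * (n + 1).choose j) := by ring
    _ ≤ (k + 1 - j) * ((n + 1) * (n.choose j * n.choose k)) := Nat.mul_le_mul_left _ hmain
    _ = (n + 1) * ((k + 1 - j) * (n.choose j * n.choose k)) := by ring
    _ ≤ (n + 1) * ∑ i ∈ Icc j k, n.choose i * n.choose (k + j - i) :=
        Nat.mul_le_mul_left _ hsum

lemma perj_bound (n k j : ℕ) (hj : j ≤ k) (hk : k + 1 ≤ n) {x : ℝ}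
    (hx0 : 0 ≤ x) (hx1 : 0 ≤ 1 - x) :
    (n : ℝ) * ((n - 1).choose k) * x ^ k * (1 - x) ^ (n - 1 - k)
        * (((k + 1 - j : ℕ) : ℝ) * Wf (n + 1) j x)
      ≤ ((n : ℝ) + 1) * ∑ i ∈ Icc j k, Wf n i x * Wf n (k + j - i) x := by
  have hL : (n : ℝ) * ((n - 1).choose k) * x ^ k * (1 - x) ^ (n - 1 - k)
        * (((k + 1 - j : ℕ) : ℝ) * Wf (n + 1) j x)
      = ((n * (n - 1).choose k * ((k + 1 - j) * (n + 1).choose j) : ℕ) : ℝ)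
        * (x ^ (k + j) * (1 - x) ^ (2 * n - k - j)) := by
    simp only [Wf]
    push_cast
    rw [show 2 * n - k - j = (n - 1 - k) + (n + 1 - j) by omega, pow_add, pow_add]
    ring
  have hR : ∑ i ∈ Icc j k, Wf n i x * Wf n (k + j - i) x
      = ((∑ i ∈ Icc j k, n.choose i * n.choose (k + j - i) : ℕ) : ℝ)
        * (x ^ (k + j) * (1 - x) ^ (2 * n - k - j)) := by
    push_cast
    rw [Finset.sum_mul]
    apply Finset.sum_congr rfl
    intro i hi
    obtain ⟨h1, h2⟩ := Finset.mem_Icc.mp hi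
    rw [Wf_mul n i (k + j - i) x (by omega) (by omega),
      show i + (k + j - i) = k + j by omega, show 2 * n - (k + j) = 2 * n - k - j by omega]
    push_cast; ring
  rw [hL, hR]
  have hM : (0 : ℝ) ≤ x ^ (k + j) * (1 - x) ^ (2 * n - k - j) := by positivity
  calc ((n * (n - 1).choose k * ((k + 1 - j) * (n + 1).choose j) : ℕ) : ℝ)
        * (x ^ (k + j) * (1 - x) ^ (2 * n - k - j))
      ≤ (((n + 1) * ∑ i ∈ Icc j k, n.choose i * n.choose (k + j - i) : ℕ) : ℝ)
        * (x ^ (k + j) * (1 - x) ^ (2 * n - k - j)) := by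
        apply mul_le_mul_of_nonneg_right _ hM
        exact_mod_cast coeff_ineq hj hk
    _ = ((n : ℝ) + 1) * (((∑ i ∈ Icc j k, n.choose i * n.choose (k + j - i) : ℕ) : ℝ)
        * (x ^ (k + j) * (1 - x) ^ (2 * n - k - j))) := by push_cast; ring

lemma sigma_sum_le (k : ℕ) (a : ℕ → ℝ) (ha : ∀ i, 0 ≤ a i) :
    ∑ j ∈ range (k + 1), ∑ i ∈ Icc j k, a i * a (k + j - i)
      ≤ (∑ i ∈ range (k + 1), a i) * (∑ i ∈ range (k + 1), a i) := by
  classical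
  rw [Finset.sum_mul_sum]
  have hre : ∑ j ∈ range (k + 1), ∑ i ∈ Icc j k, a i * a (k + j - i)
      = ∑ p ∈ (range (k + 1)).sigma (fun j => Icc j k), a p.2 * a (k + p.1 - p.2) := by
    rw [Finset.sum_sigma]
  rw [hre]
  have hinj : ∀ p ∈ (range (k + 1)).sigma (fun j => Icc j k),
      ∀ q ∈ (range (k + 1)).sigma (fun j => Icc j k),
      (fun p : Σ _ : ℕ, ℕ => (p.2, k + p.1 - p.2)) p
        = (fun p : Σ _ : ℕ, ℕ => (p.2, k + p.1 - p.2)) q → p = q := by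
    rintro ⟨j1, i1⟩ hp ⟨j2, i2⟩ hq h
    simp only [Finset.mem_sigma, Finset.mem_range, Finset.mem_Icc] at hp hq
    simp only [Prod.mk.injEq] at h
    obtain ⟨h1, h2⟩ := h
    have : j1 = j2 := by omega
    subst this; subst h1; rfl
  have hval : ∑ p ∈ (range (k + 1)).sigma (fun j => Icc j k), a p.2 * a (k + p.1 - p.2)
      = ∑ p ∈ ((range (k + 1)).sigma (fun j => Icc j k)).image
          (fun p : Σ _ : ℕ, ℕ => (p.2, k + p.1 - p.2)), a p.1 * a p.2 :=
    (Finset.sum_image (f := fun p : ℕ × ℕ => a p.1 * a p.2) hinj).symm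
  rw [hval]
  have hsub : ((range (k + 1)).sigma (fun j => Icc j k)).image
      (fun p : Σ _ : ℕ, ℕ => (p.2, k + p.1 - p.2)) ⊆ range (k + 1) ×ˢ range (k + 1) := by
    intro p hp
    simp only [Finset.mem_image] at hp
    obtain ⟨⟨j, i⟩, hq, rfl⟩ := hp
    simp only [Finset.mem_sigma, Finset.mem_range, Finset.mem_Icc] at hq
    simp only [Finset.mem_product, Finset.mem_range]
    omega
  calc ∑ p ∈ ((range (k + 1)).sigma (fun j => Icc j k)).image
          (fun p : Σ _ : ℕ, ℕ => (p.2, k + p.1 - p.2)), a p.1 * a p.2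
      ≤ ∑ p ∈ range (k + 1) ×ˢ range (k + 1), a p.1 * a p.2 := by
        apply Finset.sum_le_sum_of_subset_of_nonneg hsub
        intro p _ _
        exact mul_nonneg (ha p.1) (ha p.2)
    _ = ∑ i ∈ range (k + 1), ∑ j ∈ range (k + 1), a i * a j := Finset.sum_product _ _ _

lemma key_ineq (n k : ℕ) (hk : k ≤ n) {x : ℝ} (hx0 : 0 < x) (hx1 : x < 1) :
    (n : ℝ) * ((n - 1).choose k) * x ^ k * (1 - x) ^ (n - 1 - k)
        * ∑ j ∈ range (k + 1), Sf (n + 1) j x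
      ≤ ((n : ℝ) + 1) * (Sf n k x) ^ 2 := by
  have hx0' : (0 : ℝ) ≤ x := le_of_lt hx0
  have hx1' : (0 : ℝ) ≤ 1 - x := by linarith
  rcases eq_or_lt_of_le hk with heq | hkn
  · -- k = n : coefficient vanishes
    subst heq
    have hz : (k : ℝ) * (((k - 1).choose k : ℕ) : ℝ) = 0 := by
      rcases Nat.eq_zero_or_pos k with rfl | hn
      · simp
      · rw [Nat.choose_eq_zero_of_lt (by omega : k - 1 < k)]
        simp
    have hL : (k : ℝ) * ((k - 1).choose k) * x ^ k * (1 - x) ^ (k - 1 - k)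
        * ∑ j ∈ range (k + 1), Sf (k + 1) j x = 0 := by
      rw [hz]; ring
    rw [hL]
    positivity
  · -- k + 1 ≤ n
    have hkn' : k + 1 ≤ n := hkn
    rw [sum_Sf, Finset.mul_sum]
    have step1 : ∀ j ∈ range (k + 1),
        (n : ℝ) * ((n - 1).choose k) * x ^ k * (1 - x) ^ (n - 1 - k)
            * (((k + 1 - j : ℕ) : ℝ) * Wf (n + 1) j x)
          ≤ ((n : ℝ) + 1) * ∑ i ∈ Icc j k, Wf n i x * Wf n (k + j - i) x := by
      intro j hj
      exact perj_bound n k j (by simpa [Nat.lt_succ_iff] using Finset.mem_range.mp hj)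
        hkn' hx0' hx1'
    calc ∑ j ∈ range (k + 1), (n : ℝ) * ((n - 1).choose k) * x ^ k * (1 - x) ^ (n - 1 - k)
            * (((k + 1 - j : ℕ) : ℝ) * Wf (n + 1) j x)
        ≤ ∑ j ∈ range (k + 1),
            ((n : ℝ) + 1) * ∑ i ∈ Icc j k, Wf n i x * Wf n (k + j - i) x :=
          Finset.sum_le_sum step1
      _ = ((n : ℝ) + 1) * ∑ j ∈ range (k + 1), ∑ i ∈ Icc j k, Wf n i x * Wf n (k + j - i) x := by
          rw [Finset.mul_sum]
      _ ≤ ((n : ℝ) + 1) * ((∑ i ∈ range (k + 1), Wf n i x) * (∑ i ∈ range (k + 1), Wf n i x)) := by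
          apply mul_le_mul_of_nonneg_left _ (by positivity)
          exact sigma_sum_le k (fun i => Wf n i x) (fun i => Wf_nonneg n i hx0' (by linarith))
      _ = ((n : ℝ) + 1) * (Sf n k x) ^ 2 := by rw [Sf]; ring

lemma betaCDF_eq' (m i : ℕ) (hi : 1 ≤ i) (x : ℝ) :
    (∫ u in (0:ℝ)..x, (i : ℝ) * (m.choose i : ℝ) * u ^ (i - 1) * (1 - u) ^ (m - i))
      = 1 - Sf m (i - 1) x := by
  have hderiv : ∀ u ∈ Set.uIcc (0:ℝ) x,
      HasDerivAt (fun u => 1 - Sf m (i - 1) u)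
        ((i : ℝ) * (m.choose i : ℝ) * u ^ (i - 1) * (1 - u) ^ (m - i)) u := by
    intro u _
    have h := (hasDerivAt_Sf m (i - 1) u).const_sub 1
    refine h.congr_deriv (Eq.symm ?_)
    have c1 : (i : ℝ) * (m.choose i : ℝ) = (m : ℝ) * ((m - 1).choose (i - 1) : ℝ) := by
      have := nat_id1 m (i - 1)
      rw [show i - 1 + 1 = i by omega] at this
      have : (m.choose i * i : ℕ) = (m * (m - 1).choose (i - 1) : ℕ) := this
      exact_mod_cast by linarith [congrArg (fun t : ℕ => (t : ℝ)) this]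
    rw [neg_neg, c1, show m - 1 - (i - 1) = m - i by omega]
  have hint : IntervalIntegrable
      (fun u : ℝ => (i : ℝ) * (m.choose i : ℝ) * u ^ (i - 1) * (1 - u) ^ (m - i))
      MeasureTheory.volume 0 x := by
    apply Continuous.intervalIntegrable
    fun_prop
  have := intervalIntegral.integral_eq_sub_of_hasDerivAt hderiv hint
  rw [this, Sf_zero]
  ring

lemma strataCDF_eq (m r : ℕ) (hr : 1 ≤ r) (x : ℝ) :
    strataCDF m r x = 1 - (1 / r : ℝ) * ∑ j ∈ range r, Sf m j x := by
  unfold strataCDF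
  have h1 : ∀ i ∈ Finset.Icc 1 r, betaCDF m i x = 1 - Sf m (i - 1) x := by
    intro i hi
    exact betaCDF_eq' m i (Finset.mem_Icc.mp hi).1 x
  rw [Finset.sum_congr rfl h1, Finset.sum_sub_distrib, Finset.sum_const, Nat.card_Icc]
  have h2 : ∑ i ∈ Finset.Icc 1 r, Sf m (i - 1) x = ∑ j ∈ range r, Sf m j x := by
    apply Finset.sum_bij' (fun i (_ : i ∈ Finset.Icc 1 r) => i - 1)
      (fun j (_ : j ∈ range r) => j + 1)
    · intro i hi
      simp only [Finset.mem_Icc] at hi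
      simp only [Finset.mem_range]
      omega
    · intro j hj
      simp only [Finset.mem_range] at hj
      simp only [Finset.mem_Icc]
      omega
    · intro i hi
      simp only [Finset.mem_Icc] at hi
      omega
    · intro j _
      omega
    · intro i _
      rfl
  rw [h2]
  have hr0 : (r : ℝ) ≠ 0 := Nat.cast_ne_zero.mpr (by omega)
  rw [show r + 1 - 1 = r by omega]
  field_simp
  rw [nsmul_eq_mul, mul_one]

lemma hasDerivAt_strataCDF (m r : ℕ) (hm : 1 ≤ m) (hr : 1 ≤ r) (x : ℝ) :
    HasDerivAt (fun x => strataCDF m r x) ((m : ℝ) / r * Sf (m - 1) (r - 1) x) x := by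
  have hFeq : (fun x => strataCDF m r x)
      = fun x => 1 - (1 / r : ℝ) * ∑ j ∈ range r, Sf m j x :=
    funext (strataCDF_eq m r hr)
  rw [hFeq]
  have h1 : HasDerivAt (fun x => ∑ j ∈ range r, Sf m j x)
      (∑ j ∈ range r, -((m : ℝ) * ((m - 1).choose j) * x ^ j * (1 - x) ^ (m - 1 - j))) x :=
    HasDerivAt.fun_sum fun j _ => hasDerivAt_Sf m j x
  have h2 := (h1.const_mul (1 / r : ℝ)).const_sub 1
  refine h2.congr_deriv (Eq.symm ?_)
  rw [Sf, show r - 1 + 1 = r by omega, Finset.mul_sum, Finset.mul_sum]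
  rw [← Finset.sum_neg_distrib]
  apply Finset.sum_congr rfl
  intro j _
  simp only [Wf]
  ring

lemma logConcave_aux {h h1 h2 : ℝ → ℝ}
    (hd : ∀ x ∈ Set.Ioo (0:ℝ) 1, HasDerivAt h (h1 x) x)
    (hd2 : ∀ x ∈ Set.Ioo (0:ℝ) 1, HasDerivAt h1 (h2 x) x)
    (hpos : ∀ x ∈ Set.Ioo (0:ℝ) 1, 0 < h x)
    (hineq : ∀ x ∈ Set.Ioo (0:ℝ) 1, h2 x * h x ≤ h1 x * h1 x) :
    ConcaveOn ℝ (Set.Ioo 0 1) (fun x => Real.log (h x)) := by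
  have hI : interior (Set.Ioo (0:ℝ) 1) = Set.Ioo 0 1 := isOpen_Ioo.interior_eq
  apply concaveOn_of_hasDerivWithinAt2_nonpos (convex_Ioo 0 1)
    (f' := fun x => h1 x / h x)
    (f'' := fun x => (h2 x * h x - h1 x * h1 x) / (h x) ^ 2)
  · intro x hx
    exact ((hd x hx).log (hpos x hx).ne').continuousAt.continuousWithinAt
  · intro x hx
    rw [hI] at hx ⊢
    exact ((hd x hx).log (hpos x hx).ne').hasDerivWithinAt
  · intro x hx
    rw [hI] at hx ⊢
    exact ((hd2 x hx).div (hd x hx) (hpos x hx).ne').hasDerivWithinAt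
  · intro x hx
    rw [hI] at hx
    apply div_nonpos_of_nonpos_of_nonneg
    · linarith [hineq x hx]
    · positivity

/-- **Log-concavity of the MinPNS stratum CDF and its complement.** For `1 ≤ r ≤ m`,
both `x ↦ log 𝔹_(r)(x)` and `x ↦ log (1 - 𝔹_(r)(x))` are concave on `(0,1)`. -/
theorem strataCDF_log_concave (m : ℕ) (hm : 1 ≤ m) (r : ℕ) (hr : 1 ≤ r) (hrm : r ≤ m) :
    ConcaveOn ℝ (Set.Ioo 0 1) (fun x => Real.log (strataCDF m r x)) ∧
    ConcaveOn ℝ (Set.Ioo 0 1) (fun x => Real.log (1 - strataCDF m r x)) := by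
  have hr0 : (0:ℝ) < r := by exact_mod_cast hr
  have hm0 : (0:ℝ) < m := by exact_mod_cast (by omega : 0 < m)
  have hrne : (r:ℝ) ≠ 0 := ne_of_gt hr0
  -- abbreviations (as plain lambda terms)
  have hdF : ∀ x ∈ Set.Ioo (0:ℝ) 1, HasDerivAt (fun x => strataCDF m r x)
      ((fun x => (m:ℝ)/r * Sf (m-1) (r-1) x) x) x :=
    fun x _ => hasDerivAt_strataCDF m r hm hr x
  have hdD : ∀ x ∈ Set.Ioo (0:ℝ) 1, HasDerivAt (fun x => (m:ℝ)/r * Sf (m-1) (r-1) x)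
      ((fun x => (m:ℝ)/r * -(((m-1:ℕ):ℝ) * (((m-1)-1).choose (r-1)) * x^(r-1)
        * (1-x)^((m-1)-1-(r-1)))) x) x :=
    fun x _ => (hasDerivAt_Sf (m-1) (r-1) x).const_mul ((m:ℝ)/r)
  have hGval : ∀ x : ℝ, 1 - strataCDF m r x = (1/r : ℝ) * ∑ j ∈ range r, Sf m j x := by
    intro x
    rw [strataCDF_eq m r hr x]
    ring
  have hFpos : ∀ x ∈ Set.Ioo (0:ℝ) 1, 0 < strataCDF m r x := by
    intro x hx
    have hlt : ∀ j ∈ range r, Sf m j x < (fun _ : ℕ => (1:ℝ)) j := by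
      intro j hj
      exact Sf_lt_one m j (by have := Finset.mem_range.mp hj; omega) hx.1 hx.2
    have hsum : ∑ j ∈ range r, Sf m j x < ∑ j ∈ range r, (1:ℝ) :=
      Finset.sum_lt_sum_of_nonempty (Finset.nonempty_range_iff.mpr (by omega)) hlt
    rw [Finset.sum_const, Finset.card_range, nsmul_eq_mul, mul_one] at hsum
    rw [strataCDF_eq m r hr x]
    have h2 : (1/r : ℝ) * ∑ j ∈ range r, Sf m j x < (1/r : ℝ) * r :=
      mul_lt_mul_of_pos_left hsum (by positivity)
    rw [one_div, inv_mul_cancel₀ hrne] at h2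
    rw [one_div]
    linarith
  have hGpos : ∀ x ∈ Set.Ioo (0:ℝ) 1, 0 < 1 - strataCDF m r x := by
    intro x hx
    rw [hGval x]
    have hpos : 0 < ∑ j ∈ range r, Sf m j x :=
      Finset.sum_pos (fun j _ => Sf_pos m j hx.1.le hx.2)
        (Finset.nonempty_range_iff.mpr (by omega))
    positivity
  have hEnn : ∀ x ∈ Set.Ioo (0:ℝ) 1,
      0 ≤ ((m-1:ℕ):ℝ) * (((m-1)-1).choose (r-1)) * x^(r-1) * (1-x)^((m-1)-1-(r-1)) := by
    intro x hx
    have h1x : (0:ℝ) ≤ 1 - x := by linarith [hx.2]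
    exact mul_nonneg (mul_nonneg (mul_nonneg (by positivity) (by positivity))
      (pow_nonneg hx.1.le _)) (pow_nonneg h1x _)
  constructor
  · apply logConcave_aux hdF hdD hFpos
    intro x hx
    have hE := hEnn x hx
    have h1 : (m:ℝ)/r * -(((m-1:ℕ):ℝ) * (((m-1)-1).choose (r-1)) * x^(r-1)
        * (1-x)^((m-1)-1-(r-1))) ≤ 0 :=
      mul_nonpos_of_nonneg_of_nonpos (by positivity) (neg_nonpos.mpr hE)
    have h2 := mul_nonpos_of_nonpos_of_nonneg h1 (hFpos x hx).le
    have h3 := mul_self_nonneg ((m:ℝ)/r * Sf (m-1) (r-1) x)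
    linarith
  · apply logConcave_aux (h1 := fun x => -((m:ℝ)/r * Sf (m-1) (r-1) x))
      (h2 := fun x => -((m:ℝ)/r * -(((m-1:ℕ):ℝ) * (((m-1)-1).choose (r-1)) * x^(r-1)
        * (1-x)^((m-1)-1-(r-1)))))
      (fun x hx => (hdF x hx).const_sub 1) (fun x hx => (hdD x hx).neg) hGpos
    intro x hx
    have hk := key_ineq (m-1) (r-1) (by omega) hx.1 hx.2
    rw [show (r-1)+1 = r by omega, show (m-1)+1 = m by omega] at hk
    have hcast : ((m-1:ℕ):ℝ) + 1 = (m:ℝ) := by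
      rw [Nat.cast_sub hm]
      ring
    rw [hcast] at hk
    rw [hGval x]
    have hstep : ((m:ℝ)/(r*r)) * (((m-1:ℕ):ℝ) * (((m-1)-1).choose (r-1)) * x^(r-1)
          * (1-x)^((m-1)-1-(r-1)) * ∑ j ∈ range r, Sf m j x)
        ≤ ((m:ℝ)/(r*r)) * ((m:ℝ) * (Sf (m-1) (r-1) x)^2) :=
      mul_le_mul_of_nonneg_left hk (by positivity)
    calc -((m:ℝ)/r * -(((m-1:ℕ):ℝ) * (((m-1)-1).choose (r-1)) * x^(r-1)
            * (1-x)^((m-1)-1-(r-1)))) * ((1/r : ℝ) * ∑ j ∈ range r, Sf m j x)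
        = ((m:ℝ)/(r*r)) * (((m-1:ℕ):ℝ) * (((m-1)-1).choose (r-1)) * x^(r-1)
            * (1-x)^((m-1)-1-(r-1)) * ∑ j ∈ range r, Sf m j x) := by ring
      _ ≤ ((m:ℝ)/(r*r)) * ((m:ℝ) * (Sf (m-1) (r-1) x)^2) := hstep
      _ = -((m:ℝ)/r * Sf (m-1) (r-1) x) * -((m:ℝ)/r * Sf (m-1) (r-1) x) := by
          field_simp
end

section
/- Fix m ≥ 1, nonnegative integers n_1, …, n_m not all zero, and integers y_1, …, y_m with 0 ≤ y_r ≤ n_r. Then the log-likelihood function ℒ(θ) = ∑_{r=1}^m [ y_r·log(𝔹_(r)(θ)) + (n_r − y_r)·log(1 − 𝔹_(r)(θ)) ] is a concave function of θ on the open interval (0,1). Consequently, ℒ attains a maximum on [0,1] (with the convention ℒ extended by its limits at the endpoints), so the maximum likelihood estimator F_ml(t) = argmax_{θ∈[0,1]} ℒ(θ) exists. -/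
open Finset

/-- Extended-real logarithm: `log x` for `x > 0` and `⊥` (i.e. `-∞`, the limiting value)
for `x ≤ 0`.  Used to extend the log-likelihood to the endpoints of `[0,1]` by its limits. -/
noncomputable def elog (x : ℝ) : EReal := if x ≤ 0 then ⊥ else ((Real.log x : ℝ) : EReal)

/-- The MinPNS log-likelihood of `θ` (extended-real-valued, so that it is defined on all of
`[0,1]` with the endpoint values taken as limits; note `(0 : EReal) * ⊥ = 0`). -/
noncomputable def extLogLik (m : ℕ) (nn y : ℕ → ℕ) (θ : ℝ) : EReal :=
  ∑ r ∈ Finset.Icc 1 m,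
    (((y r : ℝ) : EReal) * elog (strataCDF m r θ)
      + (((nn r - y r : ℕ) : ℝ) : EReal) * elog (1 - strataCDF m r θ))

namespace MinPNSAux

lemma elog_ne_top (x : ℝ) : elog x ≠ ⊤ := by
  unfold elog; split <;> simp

lemma elog_mono : Monotone elog := by
  intro a b hab
  unfold elog
  split
  · exact bot_le
  · split
    · exact absurd (le_trans hab (by assumption)) (by assumption)
    · exact_mod_cast Real.log_le_log (lt_of_not_ge (by assumption)) hab

lemma elog_one : elog 1 = 0 := by simp [elog]

lemma elog_mul {a b : ℝ} (ha : 0 ≤ a) (hb : 0 ≤ b) : elog (a * b) = elog a + elog b := by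
  rcases eq_or_lt_of_le ha with h | h
  · simp [elog, ← h, EReal.bot_add]
  rcases eq_or_lt_of_le hb with h' | h'
  · simp [elog, ← h', EReal.add_bot]
  have : ¬ (a * b ≤ 0) := not_le.2 (mul_pos h h')
  simp only [elog, if_neg this, if_neg (not_le.2 h), if_neg (not_le.2 h')]
  rw [Real.log_mul h.ne' h'.ne']
  exact_mod_cast EReal.coe_add _ _

lemma elog_pow (n : ℕ) {w : ℝ} (hw : 0 ≤ w) :
    ((n : ℝ) : EReal) * elog w = elog (w ^ n) := by
  rcases Nat.eq_zero_or_pos n with rfl | hn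
  · simp [elog_one]
  rcases eq_or_lt_of_le hw with h | h
  · rw [← h, zero_pow (by omega)]
    have : elog 0 = ⊥ := by simp [elog]
    rw [this, EReal.mul_bot_of_pos]
    exact_mod_cast (by positivity : (0:ℝ) < n)
  · simp only [elog, if_neg (not_le.2 h), if_neg (not_le.2 (pow_pos h n))]
    rw [Real.log_pow]
    exact_mod_cast (EReal.coe_mul _ _).symm

lemma elog_prod {ι : Type*} (s : Finset ι) (f : ι → ℝ) (h : ∀ i ∈ s, 0 ≤ f i) :
    elog (∏ i ∈ s, f i) = ∑ i ∈ s, elog (f i) := by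
  induction s using Finset.cons_induction with
  | empty => simp [elog_one]
  | cons a s ha ih =>
    rw [Finset.prod_cons, Finset.sum_cons,
      elog_mul (h a (Finset.mem_cons_self _ _))
        (Finset.prod_nonneg fun i hi => h i (Finset.mem_cons_of_mem hi)),
      ih (fun i hi => h i (Finset.mem_cons_of_mem hi))]



noncomputable def tailP (m i : ℕ) (θ : ℝ) : ℝ :=
  ∑ j ∈ Icc i m, (m.choose j : ℝ) * θ ^ j * (1 - θ) ^ (m - j)

noncomputable def phi (m r : ℕ) (θ : ℝ) : ℝ :=
  ∑ j ∈ range r, ((m - 1).choose j : ℝ) * θ ^ j * (1 - θ) ^ (m - 1 - j)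

noncomputable def psi (m r : ℕ) (θ : ℝ) : ℝ :=
  (r : ℝ) * ((m - 1).choose r : ℝ) * θ ^ (r - 1) * (1 - θ) ^ (m - 1 - r)

/-- density-like term -/
noncomputable def dA (M j : ℕ) (θ : ℝ) : ℝ :=
  (j : ℝ) * (M.choose j : ℝ) * θ ^ (j - 1) * (1 - θ) ^ (M - j)

lemma hasDerivAt_term (M j : ℕ) (θ : ℝ) :
    HasDerivAt (fun x : ℝ => (M.choose j : ℝ) * x ^ j * (1 - x) ^ (M - j))
      (dA M j θ - dA M (j + 1) θ) θ := by
  have h1 : HasDerivAt (fun x : ℝ => (M.choose j : ℝ) * x ^ j)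
      ((M.choose j : ℝ) * ((j : ℝ) * θ ^ (j - 1))) θ := (hasDerivAt_pow j θ).const_mul _
  have h2 : HasDerivAt (fun x : ℝ => (1 - x) ^ (M - j))
      (-(((M - j : ℕ) : ℝ) * (1 - θ) ^ (M - j - 1))) θ := by
    have hin : HasDerivAt (fun x : ℝ => 1 - x) (-1) θ := by
      simpa using (hasDerivAt_id' θ).const_sub (1:ℝ)
    have := (hasDerivAt_pow (M - j) ((1:ℝ) - θ)).comp θ hin
    simpa [mul_comm, mul_assoc, Function.comp_def] using this
  have h := h1.mul h2
  refine h.congr_deriv (Eq.symm ?_)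
  have hc : ((M.choose (j+1) : ℕ) * (j+1) : ℝ) = ((M.choose j : ℕ) : ℝ) * ((M - j : ℕ) : ℝ) := by
    exact_mod_cast congrArg (Nat.cast : ℕ → ℝ) (Nat.choose_succ_right_eq M j)
  have he1 : (j + 1) - 1 = j := by omega
  have he2 : M - (j + 1) = M - j - 1 := by omega
  simp only [dA, he1, he2]
  push_cast at hc ⊢
  linear_combination (-(θ ^ j * (1 - θ) ^ (M - j - 1))) * hc


lemma telescope (M : ℕ) (θ : ℝ) {a b : ℕ} (hab : a ≤ b + 1) :
    ∑ j ∈ Icc a b, (dA M j θ - dA M (j + 1) θ) = dA M a θ - dA M (b + 1) θ := by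
  rw [← Finset.Ico_add_one_right_eq_Icc, Finset.sum_Ico_eq_sum_range]
  have h := Finset.sum_range_sub' (fun k => dA M (a + k) θ) (b + 1 - a)
  simp only [Nat.add_zero, Nat.add_sub_cancel' hab] at h
  exact h

lemma dA_top (M : ℕ) (θ : ℝ) : dA M (M + 1) θ = 0 := by
  simp [dA, Nat.choose_succ_self]

lemma hasDerivAt_tailP (m i : ℕ) (him : i ≤ m) (θ : ℝ) :
    HasDerivAt (tailP m i) (dA m i θ) θ := by
  have h : HasDerivAt (fun x => ∑ j ∈ Icc i m, (m.choose j : ℝ) * x ^ j * (1 - x) ^ (m - j))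
      (∑ j ∈ Icc i m, (dA m j θ - dA m (j + 1) θ)) θ :=
    HasDerivAt.fun_sum (fun j _ => hasDerivAt_term m j θ)
  rw [telescope m θ (by omega), dA_top, sub_zero] at h
  exact h

lemma cont_dens (m i : ℕ) :
    Continuous (fun u : ℝ => (i : ℝ) * (m.choose i : ℝ) * u ^ (i - 1) * (1 - u) ^ (m - i)) := by
  fun_prop

lemma betaCDF_eq_tailP (m i : ℕ) (h1 : 1 ≤ i) (h2 : i ≤ m) (θ : ℝ) :
    betaCDF m i θ = tailP m i θ := by
  have key : betaCDF m i θ = tailP m i θ - tailP m i 0 := by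
    apply intervalIntegral.integral_eq_sub_of_hasDerivAt
    · intro x _
      have := hasDerivAt_tailP m i h2 x
      simpa [dA] using this
    · exact (cont_dens m i).intervalIntegrable _ _
  rw [key]
  have h0 : tailP m i 0 = 0 := by
    apply Finset.sum_eq_zero
    intro j hj
    have : 1 ≤ j := le_trans h1 (Finset.mem_Icc.1 hj).1
    simp [zero_pow (by omega : j ≠ 0)]
  rw [h0, sub_zero]

lemma strataCDF_eq (m r : ℕ) (hr : r ≤ m) (θ : ℝ) :
    strataCDF m r θ = (1 / r : ℝ) * ∑ i ∈ Icc 1 r, tailP m i θ := by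
  unfold strataCDF
  congr 1
  apply Finset.sum_congr rfl
  intro i hi
  have := Finset.mem_Icc.1 hi
  exact betaCDF_eq_tailP m i this.1 (le_trans this.2 hr) θ


lemma hasDerivAt_strataCDF (m r : ℕ) (h1 : 1 ≤ r) (h2 : r ≤ m) (θ : ℝ) :
    HasDerivAt (strataCDF m r) ((m : ℝ) / r * phi m r θ) θ := by
  have hfun : strataCDF m r = fun θ => (1 / r : ℝ) * ∑ i ∈ Icc 1 r, tailP m i θ := by
    funext θ; exact strataCDF_eq m r h2 θ
  rw [hfun]
  have hsum : HasDerivAt (fun θ => ∑ i ∈ Icc 1 r, tailP m i θ)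
      (∑ i ∈ Icc 1 r, dA m i θ) θ :=
    HasDerivAt.fun_sum (fun i hi => hasDerivAt_tailP m i (le_trans (Finset.mem_Icc.1 hi).2 h2) θ)
  have h := hsum.const_mul (1 / r : ℝ)
  refine h.congr_deriv (Eq.symm ?_)
  have hkey : ∑ i ∈ Icc 1 r, dA m i θ = (m : ℝ) * phi m r θ := by
    rw [← Finset.Ico_add_one_right_eq_Icc, Finset.sum_Ico_eq_sum_range, phi, Finset.mul_sum]
    apply Finset.sum_congr (by norm_num)
    intro k _
    have hc : (m : ℕ) * ((m-1).choose k) = (m.choose (1 + k)) * (1 + k) := by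
      have := Nat.add_one_mul_choose_eq (m - 1) k
      rw [Nat.sub_add_cancel (by omega : 1 ≤ m)] at this
      rw [this, Nat.add_comm 1 k]
    have hc' : ((m : ℝ)) * ((m-1).choose k : ℝ) = ((m.choose (1+k) : ℕ) : ℝ) * ((1+k : ℕ) : ℝ) := by
      exact_mod_cast congrArg (Nat.cast : ℕ → ℝ) hc
    have he1 : 1 + k - 1 = k := by omega
    have he2 : m - (1 + k) = m - 1 - k := by omega
    rw [dA, he1, he2]
    push_cast at hc' ⊢
    linear_combination (-(θ ^ k * (1 - θ) ^ (m - 1 - k))) * hc'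
  rw [hkey]
  ring

lemma hasDerivAt_phi (m r : ℕ) (θ : ℝ) :
    HasDerivAt (phi m r) (-(psi m r θ)) θ := by
  have hsum : HasDerivAt (fun θ => ∑ j ∈ range r, ((m-1).choose j : ℝ) * θ ^ j * (1 - θ) ^ (m - 1 - j))
      (∑ j ∈ range r, (dA (m-1) j θ - dA (m-1) (j+1) θ)) θ := by
    apply HasDerivAt.fun_sum
    intro j _
    have := hasDerivAt_term (m-1) j θ
    simpa [Nat.sub_sub] using this
  rw [Finset.sum_range_sub' (fun k => dA (m-1) k θ) r] at hsum
  have h0 : dA (m-1) 0 θ = 0 := by simp [dA]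
  rw [h0, zero_sub] at hsum
  have : dA (m-1) r θ = psi m r θ := by
    simp [dA, psi, Nat.sub_sub]
  rw [this] at hsum
  exact hsum

lemma cont_phi (m r : ℕ) : Continuous (phi m r) := by
  unfold phi; fun_prop

lemma cont_psi (m r : ℕ) : Continuous (psi m r) := by
  unfold psi; fun_prop

lemma phi_nonneg (m r : ℕ) {θ : ℝ} (h0 : 0 ≤ θ) (h1 : θ ≤ 1) : 0 ≤ phi m r θ := by
  apply Finset.sum_nonneg
  intro j _
  have : (0:ℝ) ≤ 1 - θ := by linarith
  positivity

lemma psi_nonneg (m r : ℕ) {θ : ℝ} (h0 : 0 ≤ θ) (h1 : θ ≤ 1) : 0 ≤ psi m r θ := by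
  have : (0:ℝ) ≤ 1 - θ := by linarith
  unfold psi; positivity

lemma phi_pos (m r : ℕ) (hr : 1 ≤ r) {θ : ℝ} (h0 : 0 ≤ θ) (h1 : θ < 1) : 0 < phi m r θ := by
  have hterm : (0:ℝ) < ((m-1).choose 0 : ℝ) * θ ^ 0 * (1 - θ) ^ (m - 1 - 0) := by
    have : (0:ℝ) < 1 - θ := by linarith
    simp only [Nat.choose_zero_right, Nat.cast_one, pow_zero, one_mul, mul_one]
    positivity
  have hmem : 0 ∈ range r := Finset.mem_range.2 (by omega)
  have hle := Finset.single_le_sum (f := fun j => ((m-1).choose j : ℝ) * θ ^ j * (1 - θ) ^ (m - 1 - j))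
    (fun j _ => by
      have : (0:ℝ) ≤ 1 - θ := by linarith
      positivity) hmem
  exact lt_of_lt_of_le hterm hle

lemma strataCDF_zero (m r : ℕ) : strataCDF m r 0 = 0 := by
  unfold strataCDF betaCDF
  simp [intervalIntegral.integral_same]

lemma tailP_one (m i : ℕ) (h2 : i ≤ m) : tailP m i 1 = 1 := by
  unfold tailP
  rw [Finset.sum_eq_single m]
  · simp
  · intro j hj hjm
    have : j < m := lt_of_le_of_ne (Finset.mem_Icc.1 hj).2 hjm
    simp [zero_pow (by omega : m - j ≠ 0)]
  · intro h
    exact absurd (Finset.mem_Icc.2 ⟨h2, le_refl m⟩) h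

lemma strataCDF_one (m r : ℕ) (h1 : 1 ≤ r) (h2 : r ≤ m) : strataCDF m r 1 = 1 := by
  rw [strataCDF_eq m r h2]
  rw [Finset.sum_congr rfl (fun i hi => tailP_one m i (le_trans (Finset.mem_Icc.1 hi).2 h2))]
  rw [Finset.sum_const, Nat.card_Icc, show r + 1 - 1 = r from rfl, nsmul_eq_mul, mul_one]
  have : (r:ℝ) ≠ 0 := by exact_mod_cast (by omega : r ≠ 0)
  field_simp

lemma cont_strataCDF (m r : ℕ) (h1 : 1 ≤ r) (h2 : r ≤ m) : Continuous (strataCDF m r) :=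
  continuous_iff_continuousAt.2 fun θ => (hasDerivAt_strataCDF m r h1 h2 θ).continuousAt

lemma strataCDF_strictMono (m r : ℕ) (h1 : 1 ≤ r) (h2 : r ≤ m) :
    StrictMonoOn (strataCDF m r) (Set.Icc 0 1) := by
  apply strictMonoOn_of_deriv_pos (convex_Icc 0 1)
    (cont_strataCDF m r h1 h2).continuousOn
  intro x hx
  rw [interior_Icc] at hx
  rw [(hasDerivAt_strataCDF m r h1 h2 x).deriv]
  have hphi := phi_pos m r h1 (le_of_lt hx.1) hx.2
  have hm : (0:ℝ) < (m:ℝ) / r := by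
    apply div_pos <;> exact_mod_cast (by omega : 0 < _)
  positivity

lemma strataCDF_mem (m r : ℕ) (h1 : 1 ≤ r) (h2 : r ≤ m) {θ : ℝ}
    (hθ : θ ∈ Set.Icc (0:ℝ) 1) : 0 ≤ strataCDF m r θ ∧ strataCDF m r θ ≤ 1 := by
  have hmono := (strataCDF_strictMono m r h1 h2).monotoneOn
  constructor
  · have := hmono (Set.left_mem_Icc.2 zero_le_one) hθ hθ.1
    rwa [strataCDF_zero] at this
  · have := hmono hθ (Set.right_mem_Icc.2 zero_le_one) hθ.2
    rwa [strataCDF_one m r h1 h2] at this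

lemma strataCDF_mem_open (m r : ℕ) (h1 : 1 ≤ r) (h2 : r ≤ m) {θ : ℝ}
    (hθ : θ ∈ Set.Ioo (0:ℝ) 1) : 0 < strataCDF m r θ ∧ strataCDF m r θ < 1 := by
  have hsm := strataCDF_strictMono m r h1 h2
  have hθ' : θ ∈ Set.Icc (0:ℝ) 1 := ⟨le_of_lt hθ.1, le_of_lt hθ.2⟩
  constructor
  · have := hsm (Set.left_mem_Icc.2 zero_le_one) hθ' hθ.1
    rwa [strataCDF_zero] at this
  · have := hsm hθ' (Set.right_mem_Icc.2 zero_le_one) hθ.2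
    rwa [strataCDF_one m r h1 h2] at this

lemma pointwise_key (m r : ℕ) (h2 : r < m) {θ t : ℝ}
    (h0 : 0 ≤ θ) (hθt : θ ≤ t) (ht1 : t ≤ 1) :
    psi m r θ * phi m r t ≤ psi m r t * phi m r θ := by
  unfold phi psi
  rw [Finset.mul_sum, Finset.mul_sum]
  apply Finset.sum_le_sum
  intro j hj
  have hjr : j < r := Finset.mem_range.1 hj
  have ht0 : 0 ≤ t := le_trans h0 hθt
  have h1t : (0:ℝ) ≤ 1 - t := by linarith
  have h1θ : (0:ℝ) ≤ 1 - θ := by linarith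
  obtain ⟨d, hd⟩ : ∃ d, r - 1 = j + d := ⟨r - 1 - j, by omega⟩
  have hb : m - 1 - j = (m - 1 - r) + (d + 1) := by omega
  have e1 : θ ^ d ≤ t ^ d := pow_le_pow_left₀ h0 hθt d
  have e2 : (1 - t) ^ (d + 1) ≤ (1 - θ) ^ (d + 1) := pow_le_pow_left₀ h1t (by linarith) _
  have core : θ ^ d * (1 - t) ^ (d + 1) ≤ t ^ d * (1 - θ) ^ (d + 1) :=
    mul_le_mul e1 e2 (by positivity) (by positivity)
  have common : (0:ℝ) ≤ θ ^ j * t ^ j * (1 - θ) ^ (m - 1 - r) * (1 - t) ^ (m - 1 - r)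
      * ((r : ℝ) * ((m - 1).choose r : ℝ) * ((m - 1).choose j : ℝ)) := by positivity
  have H := mul_le_mul_of_nonneg_left core common
  rw [hd, hb]
  simp only [pow_add, pow_one] at H ⊢
  nlinarith [H]

lemma key_ineq (m r : ℕ) (h1 : 1 ≤ r) (h2 : r ≤ m) {θ : ℝ} (hθ : θ ∈ Set.Ioo (0:ℝ) 1) :
    psi m r θ * (1 - strataCDF m r θ) ≤ (m : ℝ) / r * (phi m r θ) ^ 2 := by
  have h0 : (0:ℝ) ≤ θ := le_of_lt hθ.1
  have hθ1 : θ ≤ 1 := le_of_lt hθ.2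
  have hmr : (0:ℝ) < (m : ℝ) / r := by
    apply div_pos <;> exact_mod_cast (by omega : 0 < _)
  rcases eq_or_lt_of_le h2 with rfl | hlt
  · have hz : psi r r θ = 0 := by
      simp [psi, Nat.choose_eq_zero_of_lt (by omega : r - 1 < r)]
    rw [hz, zero_mul]
    positivity
  · -- r < m
    set J := ∫ t in θ..1, phi m r t with hJ
    have hI2 : (m : ℝ) / r * J = 1 - strataCDF m r θ := by
      have h := intervalIntegral.integral_eq_sub_of_hasDerivAt
        (f := strataCDF m r) (f' := fun t => (m : ℝ) / r * phi m r t)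
        (fun x _ => hasDerivAt_strataCDF m r h1 h2 x)
        ((continuous_const.mul (cont_phi m r)).intervalIntegrable θ 1)
      rw [intervalIntegral.integral_const_mul, strataCDF_one m r h1 h2] at h
      rw [hJ, h]
    have hI1 : ∫ t in θ..1, psi m r t = phi m r θ - phi m r 1 := by
      have h := intervalIntegral.integral_eq_sub_of_hasDerivAt
        (f := phi m r) (f' := fun t => -(psi m r t))
        (fun x _ => hasDerivAt_phi m r x)
        (((cont_psi m r).neg).intervalIntegrable θ 1)
      rw [intervalIntegral.integral_neg] at h
      linarith [h]
    have hmono : ∫ t in θ..1, psi m r θ * phi m r t ≤ ∫ t in θ..1, psi m r t * phi m r θ := by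
      apply intervalIntegral.integral_mono_on hθ1
        ((continuous_const.mul (cont_phi m r)).intervalIntegrable θ 1)
        (((cont_psi m r).mul continuous_const).intervalIntegrable θ 1)
      intro t ht
      exact pointwise_key m r hlt h0 ht.1 ht.2
    rw [intervalIntegral.integral_const_mul, intervalIntegral.integral_mul_const, hI1] at hmono
    have hφ := phi_nonneg m r h0 hθ1
    have hφ1 := phi_nonneg m r (zero_le_one) (le_refl (1:ℝ))
    have hψ := psi_nonneg m r h0 hθ1
    have hA : psi m r θ * J ≤ phi m r θ * phi m r θ := by nlinarith [hmono]
    calc psi m r θ * (1 - strataCDF m r θ) = (m : ℝ) / r * (psi m r θ * J) := by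
          rw [← hI2]; ring
      _ ≤ (m : ℝ) / r * (phi m r θ * phi m r θ) :=
          mul_le_mul_of_nonneg_left hA (le_of_lt hmr)
      _ = (m : ℝ) / r * (phi m r θ) ^ 2 := by ring

lemma concave_log_S (m r : ℕ) (h1 : 1 ≤ r) (h2 : r ≤ m) :
    ConcaveOn ℝ (Set.Ioo 0 1) (fun θ => Real.log (strataCDF m r θ)) := by
  have hIoo : interior (Set.Ioo (0:ℝ) 1) = Set.Ioo 0 1 := isOpen_Ioo.interior_eq
  apply concaveOn_of_hasDerivWithinAt2_nonpos (convex_Ioo 0 1)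
    (f' := fun θ => ((m : ℝ) / r * phi m r θ) / strataCDF m r θ)
    (f'' := fun θ => ((m : ℝ) / r * (-(psi m r θ)) * strataCDF m r θ
      - ((m : ℝ) / r * phi m r θ) * ((m : ℝ) / r * phi m r θ)) / (strataCDF m r θ) ^ 2)
  · exact ContinuousOn.log (cont_strataCDF m r h1 h2).continuousOn
      (fun x hx => (strataCDF_mem_open m r h1 h2 hx).1.ne')
  · intro x hx
    rw [hIoo] at hx ⊢
    exact ((hasDerivAt_strataCDF m r h1 h2 x).log
      (strataCDF_mem_open m r h1 h2 hx).1.ne').hasDerivWithinAt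
  · intro x hx
    rw [hIoo] at hx ⊢
    exact (((hasDerivAt_phi m r x).const_mul ((m:ℝ)/r)).div
      (hasDerivAt_strataCDF m r h1 h2 x)
      (strataCDF_mem_open m r h1 h2 hx).1.ne').hasDerivWithinAt
  · intro x hx
    rw [hIoo] at hx
    apply div_nonpos_of_nonpos_of_nonneg _ (sq_nonneg _)
    have hS := (strataCDF_mem_open m r h1 h2 hx).1
    have hψ := psi_nonneg m r (le_of_lt hx.1) (le_of_lt hx.2)
    have hmr : (0:ℝ) ≤ (m : ℝ) / r := by positivity
    nlinarith [sq_nonneg ((m : ℝ) / r * phi m r x),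
      mul_nonneg (mul_nonneg hmr hψ) (le_of_lt hS)]

lemma concave_log_one_sub_S (m r : ℕ) (h1 : 1 ≤ r) (h2 : r ≤ m) :
    ConcaveOn ℝ (Set.Ioo 0 1) (fun θ => Real.log (1 - strataCDF m r θ)) := by
  have hIoo : interior (Set.Ioo (0:ℝ) 1) = Set.Ioo 0 1 := isOpen_Ioo.interior_eq
  have hone : ∀ x : ℝ, HasDerivAt (fun θ => 1 - strataCDF m r θ)
      (-((m : ℝ) / r * phi m r x)) x := fun x => by
    simpa using ((hasDerivAt_strataCDF m r h1 h2 x).const_sub (1:ℝ))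
  apply concaveOn_of_hasDerivWithinAt2_nonpos (convex_Ioo 0 1)
    (f' := fun θ => (-((m : ℝ) / r * phi m r θ)) / (1 - strataCDF m r θ))
    (f'' := fun θ => ((-((m : ℝ) / r * (-(psi m r θ)))) * (1 - strataCDF m r θ)
      - (-((m : ℝ) / r * phi m r θ)) * (-((m : ℝ) / r * phi m r θ)))
        / (1 - strataCDF m r θ) ^ 2)
  · apply ContinuousOn.log
      (continuous_const.sub (cont_strataCDF m r h1 h2)).continuousOn
      (fun x hx => by
        have := (strataCDF_mem_open m r h1 h2 hx).2
        exact ne_of_gt (by simp only [Pi.sub_apply]; linarith))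
  · intro x hx
    rw [hIoo] at hx ⊢
    have hne : 1 - strataCDF m r x ≠ 0 := by
      have := (strataCDF_mem_open m r h1 h2 hx).2; exact ne_of_gt (by linarith)
    exact ((hone x).log hne).hasDerivWithinAt
  · intro x hx
    rw [hIoo] at hx ⊢
    have hne : 1 - strataCDF m r x ≠ 0 := by
      have := (strataCDF_mem_open m r h1 h2 hx).2; exact ne_of_gt (by linarith)
    exact ((((hasDerivAt_phi m r x).const_mul ((m:ℝ)/r)).neg).div (hone x) hne).hasDerivWithinAt
  · intro x hx
    rw [hIoo] at hx
    apply div_nonpos_of_nonpos_of_nonneg _ (sq_nonneg _)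
    have hkey := key_ineq m r h1 h2 hx
    have hmr : (0:ℝ) ≤ (m : ℝ) / r := by positivity
    nlinarith [mul_le_mul_of_nonneg_left hkey hmr]

lemma concaveOn_finset_sum {ι : Type*} (s : Finset ι) {D : Set ℝ} (hD : Convex ℝ D)
    (f : ι → ℝ → ℝ) (h : ∀ i ∈ s, ConcaveOn ℝ D (f i)) :
    ConcaveOn ℝ D (fun x => ∑ i ∈ s, f i x) := by
  induction s using Finset.cons_induction with
  | empty => simpa using concaveOn_const (0:ℝ) hD
  | cons a s ha ih =>
    simp only [Finset.sum_cons]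
    exact (h a (Finset.mem_cons_self _ _)).add
      (ih fun i hi => h i (Finset.mem_cons_of_mem hi))

lemma extLogLik_eq (m : ℕ) (hm : 1 ≤ m) (nn y : ℕ → ℕ) {θ : ℝ}
    (hθ : θ ∈ Set.Icc (0:ℝ) 1) :
    extLogLik m nn y θ =
      elog (∏ r ∈ Icc 1 m,
        (strataCDF m r θ) ^ (y r) * (1 - strataCDF m r θ) ^ (nn r - y r)) := by
  have hbounds : ∀ r ∈ Icc 1 m, 0 ≤ strataCDF m r θ ∧ strataCDF m r θ ≤ 1 := fun r hr =>
    strataCDF_mem m r (Finset.mem_Icc.1 hr).1 (Finset.mem_Icc.1 hr).2 hθ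
  rw [elog_prod _ _ (fun r hr => by
    obtain ⟨hS0, hS1⟩ := hbounds r hr
    have h1 : (0:ℝ) ≤ 1 - strataCDF m r θ := by linarith
    positivity)]
  unfold extLogLik
  apply Finset.sum_congr rfl
  intro r hr
  obtain ⟨hS0, hS1⟩ := hbounds r hr
  have h1 : (0:ℝ) ≤ 1 - strataCDF m r θ := by linarith
  rw [elog_mul (pow_nonneg hS0 _) (pow_nonneg h1 _), ← elog_pow _ hS0, ← elog_pow _ h1]

end MinPNSAux

/-- **Concavity of the MinPNS log-likelihood and existence of the MLE.** For counts
`0 ≤ y_r ≤ n_r` (not all `n_r` zero), the log-likelihood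
`ℒ(θ) = ∑_r [y_r log 𝔹_(r)(θ) + (n_r - y_r) log (1 - 𝔹_(r)(θ))]` is concave on `(0,1)`;
consequently (extending `ℒ` to `[0,1]` by its limits at the endpoints) `ℒ` attains a
maximum on `[0,1]`, i.e. the maximum likelihood estimator exists. -/
theorem logLik_concave_and_mle_exists
    (m : ℕ) (hm : 1 ≤ m) (nn y : ℕ → ℕ)
    (hnn : ∃ r ∈ Finset.Icc 1 m, nn r ≠ 0)
    (hy : ∀ r ∈ Finset.Icc 1 m, y r ≤ nn r) :
    ConcaveOn ℝ (Set.Ioo 0 1)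
      (fun θ => ∑ r ∈ Finset.Icc 1 m,
        ((y r : ℝ) * Real.log (strataCDF m r θ)
          + ((nn r : ℝ) - (y r : ℝ)) * Real.log (1 - strataCDF m r θ))) ∧
    ∃ θ₀ ∈ Set.Icc (0:ℝ) 1, ∀ θ ∈ Set.Icc (0:ℝ) 1,
      extLogLik m nn y θ ≤ extLogLik m nn y θ₀ := by
  constructor
  · apply MinPNSAux.concaveOn_finset_sum _ (convex_Ioo 0 1)
    intro r hr
    obtain ⟨h1, h2⟩ := Finset.mem_Icc.1 hr
    have hy' : (0:ℝ) ≤ (nn r : ℝ) - (y r : ℝ) := by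
      have := hy r hr; have : (y r : ℝ) ≤ (nn r : ℝ) := by exact_mod_cast this
      linarith
    have t1 : ConcaveOn ℝ (Set.Ioo 0 1)
        (fun θ => (y r : ℝ) * Real.log (strataCDF m r θ)) := by
      have := (MinPNSAux.concave_log_S m r h1 h2).smul
        (c := (y r : ℝ)) (by positivity)
      simpa [smul_eq_mul] using this
    have t2 : ConcaveOn ℝ (Set.Ioo 0 1)
        (fun θ => ((nn r : ℝ) - (y r : ℝ)) * Real.log (1 - strataCDF m r θ)) := by
      have := (MinPNSAux.concave_log_one_sub_S m r h1 h2).smul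
        (c := (nn r : ℝ) - (y r : ℝ)) hy'
      simpa [smul_eq_mul] using this
    exact t1.add t2
  · set Lik : ℝ → ℝ := fun θ => ∏ r ∈ Finset.Icc 1 m,
      (strataCDF m r θ) ^ (y r) * (1 - strataCDF m r θ) ^ (nn r - y r) with hLik
    have hcont : Continuous Lik := by
      apply continuous_finset_prod
      intro r hr
      obtain ⟨h1, h2⟩ := Finset.mem_Icc.1 hr
      exact ((MinPNSAux.cont_strataCDF m r h1 h2).pow _).mul
        ((continuous_const.sub (MinPNSAux.cont_strataCDF m r h1 h2)).pow _)
    obtain ⟨θ₀, hθ₀, hmax⟩ := isCompact_Icc.exists_isMaxOn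
      (Set.nonempty_Icc.2 zero_le_one) hcont.continuousOn
    refine ⟨θ₀, hθ₀, fun θ hθ => ?_⟩
    rw [MinPNSAux.extLogLik_eq m hm nn y hθ, MinPNSAux.extLogLik_eq m hm nn y hθ₀]
    exact MinPNSAux.elog_mono (hmax hθ)
end
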